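/- arXiv:1309.7417 — 11 statements merged into one kernel-verified Lean document; each statement's English description precedes it below -/
import Mathlib

section
/- Let n ≥ 1 and suppose B and B' are weakly nonsingular n×n integer matrices, and Δ, Δ' are n×n real diagonal matrices with strictly positive diagonal entries. If BΔ = B'Δ' (coercing the integer matrices to real matrices), then Δ = Δ' and B = B'. -/
/-- An `n × n` integer matrix is weakly nonsingular if it has rank `n` and
every column is unimodular (the gcd of the entries of each column is `1`). -/
def WeaklyNonsingular {n : ℕ} (B : Matrix (Fin n) (Fin n) ℤ) : Prop :=
  B.rank = n ∧ ∀ j : Fin n, Finset.univ.gcd (fun i => B i j) = 1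

theorem stmt0 {n : ℕ} (hn : 1 ≤ n) (B B' : Matrix (Fin n) (Fin n) ℤ)
    (hB : WeaklyNonsingular B) (hB' : WeaklyNonsingular B')
    (δ δ' : Fin n → ℝ) (hδ : ∀ i, 0 < δ i) (hδ' : ∀ i, 0 < δ' i)
    (h : B.map (Int.cast : ℤ → ℝ) * Matrix.diagonal δ
        = B'.map (Int.cast : ℤ → ℝ) * Matrix.diagonal δ') :
    δ = δ' ∧ B = B' := by
  have key : ∀ i j, (B i j : ℝ) * δ j = (B' i j : ℝ) * δ' j := by
    intro i j
    have := congrFun (congrFun h i) j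
    simpa [Matrix.mul_diagonal] using this
  have main : ∀ j, δ j = δ' j ∧ ∀ i, B i j = B' i j := by
    intro j
    have hg := hB.2 j
    have hg' := hB'.2 j
    obtain ⟨i0, hi0⟩ : ∃ i, B i j ≠ 0 := by
      by_contra hc
      push_neg at hc
      rw [Finset.gcd_eq_zero_iff.mpr (fun i _ => hc i)] at hg
      exact zero_ne_one hg
    set a := B i0 j with ha
    set b := B' i0 j with hbdef
    have h2 : (a:ℝ) * δ j = (b:ℝ) * δ' j := key i0 j
    have hb : b ≠ 0 := by
      intro hb0
      rw [hb0] at h2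
      simp at h2
      rcases h2 with h1 | h1
      · exact hi0 h1
      · exact (hδ j).ne' h1
    have hcross : ∀ i, b * B i j = a * B' i j := by
      intro i
      have h1 := key i j
      have : ((b * B i j : ℤ) : ℝ) = ((a * B' i j : ℤ) : ℝ) := by
        push_cast
        have hd : (δ' j) ≠ 0 := (hδ' j).ne'
        apply mul_right_cancel₀ hd
        ring_nf
        linear_combination (-(B i j : ℝ)) * h2 + (a : ℝ) * h1
      exact_mod_cast this
    have habs : |b| = |a| := by
      have e1 : (Finset.univ.gcd fun i => b * B i j) = |b| := by
        rw [Finset.gcd_mul_left, hg]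
        rw [Int.abs_eq_normalize, mul_one]
      have e2 : (Finset.univ.gcd fun i => a * B' i j) = |a| := by
        rw [Finset.gcd_mul_left, hg']
        rw [Int.abs_eq_normalize, mul_one]
      rw [← e1, ← e2]
      exact Finset.gcd_congr rfl (fun i _ => hcross i)
    have hab : a = b := by
      rcases abs_eq_abs.mp habs with h1 | h1
      · exact h1.symm
      · exfalso
        -- a = -b, but a δ = b δ' with δ, δ' > 0
        rw [h1] at h2
        push_cast at h2
        have hsum : (a:ℝ) * (δ j + δ' j) = 0 := by linarith
        have haR : (a:ℝ) ≠ 0 := by exact_mod_cast hi0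
        have : δ j + δ' j = 0 := by
          rcases mul_eq_zero.mp hsum with h' | h'
          · exact absurd h' haR
          · exact h'
        nlinarith [hδ j, hδ' j]
    have hδeq : δ j = δ' j := by
      rw [hab] at h2
      have hbR : (b : ℝ) ≠ 0 := by exact_mod_cast hb
      exact mul_left_cancel₀ hbR h2
    refine ⟨hδeq, fun i => ?_⟩
    have := hcross i
    rw [hab] at this
    exact mul_left_cancel₀ hb this
  constructor
  · funext j; exact (main j).1
  · ext i j; exact (main j).2 i
end

section
/- For every weakly nonsingular n×n integer matrix B there exists exactly one weakly nonsingular n×n integer matrix C such that CᵀB is a diagonal matrix with strictly positive diagonal entries. (This C is called the opposite B^op of B.) -/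
open Matrix Module Cardinal

lemma rank_eq_iff_det_ne_zero {n : ℕ} (A : Matrix (Fin n) (Fin n) ℤ) :
    A.rank = n ↔ A.det ≠ 0 := by
  constructor
  · intro h hdet
    obtain ⟨v, hv, hAv⟩ := Matrix.exists_mulVec_eq_zero_iff.mpr hdet
    have hker : 0 < Module.rank ℤ (LinearMap.ker A.mulVecLin) := by
      rw [rank_pos_iff_exists_ne_zero]
      refine ⟨⟨v, ?_⟩, ?_⟩
      · simpa [Matrix.mulVecLin_apply] using hAv
      · simpa using hv
    have hsum := LinearMap.rank_range_add_rank_ker A.mulVecLin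
    rw [rank_fin_fun] at hsum
    have hrle : Module.rank ℤ (LinearMap.range A.mulVecLin) < ℵ₀ := by
      refine lt_of_le_of_lt ?_ (Cardinal.nat_lt_aleph0 n)
      rw [← hsum]; exact le_self_add
    have hkle : Module.rank ℤ (LinearMap.ker A.mulVecLin) < ℵ₀ := by
      refine lt_of_le_of_lt ?_ (Cardinal.nat_lt_aleph0 n)
      rw [← hsum]; exact le_add_self
    have := congrArg Cardinal.toNat hsum
    rw [Cardinal.toNat_add hrle hkle, Cardinal.toNat_natCast] at this
    have hk0 : Cardinal.toNat (Module.rank ℤ (LinearMap.ker A.mulVecLin)) ≠ 0 := by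
      rw [Cardinal.toNat_ne_zero]
      exact ⟨hker.ne', hkle⟩
    have : Matrix.rank A + Cardinal.toNat (Module.rank ℤ (LinearMap.ker A.mulVecLin)) = n := this
    omega
  · intro hdet
    have hinj : Function.Injective A.mulVecLin := by
      rw [← LinearMap.ker_eq_bot, LinearMap.ker_eq_bot']
      intro v hv
      by_contra hv0
      exact hdet (Matrix.exists_mulVec_eq_zero_iff.mp
        ⟨v, hv0, by simpa [Matrix.mulVecLin_apply] using hv⟩)
    rw [Matrix.rank, LinearMap.finrank_range_of_inj hinj, Module.finrank_fin_fun]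

/-- Key uniqueness lemma: two matrices with unimodular columns whose transposes
diagonalize `B` with positive diagonal must be equal. -/
lemma unique_aux {n : ℕ} {B C₁ C₂ : Matrix (Fin n) (Fin n) ℤ} (hdet : B.det ≠ 0)
    (h₁g : ∀ j : Fin n, Finset.univ.gcd (fun i => C₁ i j) = 1)
    (h₂g : ∀ j : Fin n, Finset.univ.gcd (fun i => C₂ i j) = 1)
    {m₁ m₂ : Fin n → ℤ} (hm₁ : ∀ i, 0 < m₁ i) (hm₂ : ∀ i, 0 < m₂ i)
    (h₁ : C₁ᵀ * B = Matrix.diagonal m₁) (h₂ : C₂ᵀ * B = Matrix.diagonal m₂) :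
    C₁ = C₂ := by
  have key : ∀ j i, m₂ j * C₁ i j = m₁ j * C₂ i j := by
    intro j
    set w : Fin n → ℤ := fun i => m₂ j * C₁ i j - m₁ j * C₂ i j with hw
    have hwB : w ᵥ* B = 0 := by
      funext k
      have e1 : (C₁ᵀ * B) j k = Matrix.diagonal m₁ j k := by rw [h₁]
      have e2 : (C₂ᵀ * B) j k = Matrix.diagonal m₂ j k := by rw [h₂]
      rw [Matrix.mul_apply] at e1 e2
      simp only [Matrix.transpose_apply] at e1 e2
      have : (w ᵥ* B) k = m₂ j * (∑ i, C₁ i j * B i k) - m₁ j * (∑ i, C₂ i j * B i k) := by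
        simp [Matrix.vecMul, dotProduct, hw, sub_mul, mul_assoc,
          Finset.sum_sub_distrib, Finset.mul_sum]
      rw [this, e1, e2]
      by_cases hjk : j = k <;> simp [Matrix.diagonal_apply, hjk, mul_comm]
    have hw0 : w = 0 := by
      by_contra hw0
      have : Bᵀ.det = 0 := Matrix.exists_mulVec_eq_zero_iff.mp
        ⟨w, hw0, by rw [Matrix.mulVec_transpose, hwB]⟩
      rw [Matrix.det_transpose] at this
      exact hdet this
    intro i
    have := congrFun hw0 i
    simp only [hw, Pi.zero_apply] at this
    linarith
  have hm : m₁ = m₂ := by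
    funext j
    have e1 : Finset.univ.gcd (fun i => m₂ j * C₁ i j) = m₂ j := by
      rw [Finset.gcd_mul_left, h₁g j, mul_one, Int.normalize_of_nonneg (hm₂ j).le]
    have e2 : Finset.univ.gcd (fun i => m₁ j * C₂ i j) = m₁ j := by
      rw [Finset.gcd_mul_left, h₂g j, mul_one, Int.normalize_of_nonneg (hm₁ j).le]
    rw [← e1, ← e2]
    exact Finset.gcd_congr rfl (fun i _ => (key j i).symm)
  ext i j
  have := key j i
  rw [hm] at this
  exact mul_left_cancel₀ (hm₂ j).ne' this

theorem stmt1 {n : ℕ} (B : Matrix (Fin n) (Fin n) ℤ) (hB : WeaklyNonsingular B) :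
    ∃! C : Matrix (Fin n) (Fin n) ℤ,
      WeaklyNonsingular C ∧
        ∃ m : Fin n → ℤ, (∀ i, 0 < m i) ∧ Cᵀ * B = Matrix.diagonal m := by
  have hdet : B.det ≠ 0 := (rank_eq_iff_det_ne_zero B).mp hB.1
  set d := B.det with hd
  set s : ℤ := if 0 < d then 1 else -1 with hs
  have hsd : s * d = |d| := by
    rcases hdet.lt_or_gt with h | h
    · rw [hs, if_neg (not_lt.mpr h.le), abs_of_neg h]; ring
    · rw [hs, if_pos h, abs_of_pos h]; ring
  have hsd_pos : 0 < s * d := by rw [hsd]; exact abs_pos.mpr hdet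
  set A := B.adjugate with hA
  have hAB : A * B = d • (1 : Matrix (Fin n) (Fin n) ℤ) := B.adjugate_mul
  have hABjk : ∀ j k, ∑ i, A j i * B i k = if j = k then d else 0 := by
    intro j k
    have := congrFun (congrFun hAB j) k
    rw [Matrix.mul_apply] at this
    simpa [Matrix.one_apply, Matrix.smul_apply, mul_ite] using this
  set g : Fin n → ℤ := fun j => Finset.univ.gcd (fun i => A j i) with hg
  have hgdvd : ∀ j i, g j ∣ A j i := fun j i => Finset.gcd_dvd (Finset.mem_univ i)
  have hrow : ∀ j, ∃ i, A j i ≠ 0 := by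
    intro j
    by_contra h
    push_neg at h
    have := hABjk j j
    simp at this
    apply hdet
    rw [← this]
    exact Finset.sum_eq_zero fun i _ => by rw [h i, zero_mul]
  have hg0 : ∀ j, g j ≠ 0 := by
    intro j hj
    obtain ⟨i, hi⟩ := hrow j
    exact hi ((Finset.gcd_eq_zero_iff.mp hj) i (Finset.mem_univ i))
  have hgpos : ∀ j, 0 < g j := by
    intro j
    rcases (hg0 j).lt_or_gt with h | h
    · exfalso
      have : normalize (g j) = g j := Finset.normalize_gcd
      rw [Int.normalize_of_nonpos h.le] at this
      omega
    · exact h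
  have hgd : ∀ j, g j ∣ d := by
    intro j
    have := hABjk j j
    simp at this
    rw [← this]
    exact Finset.dvd_sum fun i _ => Dvd.dvd.mul_right (hgdvd j i) _
  set C : Matrix (Fin n) (Fin n) ℤ := fun i j => (s * A j i) / g j with hC
  set m : Fin n → ℤ := fun j => (s * d) / g j with hm
  have hgsd : ∀ j i, g j ∣ s * A j i := fun j i => (hgdvd j i).mul_left s
  have hCg : ∀ i j, g j * C i j = s * A j i := fun i j => Int.mul_ediv_cancel' (hgsd j i)
  have hmpos : ∀ j, 0 < m j := by
    intro j
    obtain ⟨c, hc⟩ := (hgd j).mul_left s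
    have hc' : s * d = g j * c := by linarith [hc]
    have : m j = c := by
      show s * d / g j = c
      rw [hc', Int.mul_ediv_cancel_left _ (hg0 j)]
    rw [this]
    nlinarith [hgpos j, hsd_pos]
  have hmg : ∀ j, g j * m j = s * d := fun j => Int.mul_ediv_cancel' ((hgd j).mul_left s)
  have hCB : Cᵀ * B = Matrix.diagonal m := by
    ext j k
    apply mul_left_cancel₀ (hg0 j)
    rw [Matrix.mul_apply]
    simp only [Matrix.transpose_apply]
    have : g j * ∑ i, C i j * B i k = ∑ i, (g j * C i j) * B i k := by
      rw [Finset.mul_sum]; congr 1; funext i; ring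
    rw [this]
    have : ∑ i, (g j * C i j) * B i k = s * ∑ i, A j i * B i k := by
      rw [Finset.mul_sum]; congr 1; funext i; rw [hCg i j]; ring
    rw [this, hABjk j k]
    by_cases hjk : j = k
    · subst hjk
      simp [Matrix.diagonal_apply_eq, hmg j]
    · simp [Matrix.diagonal_apply_ne _ hjk, hjk]
  have hCgcd : ∀ j, Finset.univ.gcd (fun i => C i j) = 1 := by
    intro j
    obtain ⟨i₀, hi₀⟩ := hrow j
    have hrew : (fun i => C i j) = fun i => s * (A j i / g j) := by
      funext i
      rw [hC]
      exact Int.mul_ediv_assoc s (hgdvd j i)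
    rw [hrew, Finset.gcd_mul_left]
    have hgcd1 : Finset.univ.gcd (fun i => A j i / g j) = 1 :=
      Finset.gcd_div_eq_one (f := fun i => A j i) (Finset.mem_univ i₀) hi₀
    rw [hgcd1, mul_one]
    rcases hdet.lt_or_gt with h | h
    · rw [hs, if_neg (not_lt.mpr h.le)]
      rw [Int.normalize_of_nonpos (by norm_num)]; norm_num
    · rw [hs, if_pos h, normalize_one]
  have hCrank : C.rank = n := by
    rw [rank_eq_iff_det_ne_zero]
    intro hCdet
    have : (Cᵀ * B).det = 0 := by rw [Matrix.det_mul, Matrix.det_transpose, hCdet, zero_mul]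
    rw [hCB, Matrix.det_diagonal] at this
    obtain ⟨j, -, hj⟩ := Finset.prod_eq_zero_iff.mp this
    exact (hmpos j).ne' hj
  refine ⟨C, ⟨⟨hCrank, hCgcd⟩, m, hmpos, hCB⟩, ?_⟩
  rintro C' ⟨⟨-, hC'g⟩, m', hm'pos, hC'B⟩
  exact unique_aux hdet hC'g hCgcd hm'pos hmpos hC'B hCB
end

section
/- Let B ∈ 𝒩𝒮_n and let C ∈ 𝒩𝒮_n satisfy CᵀB = diag(m(1),…,m(n)) with all m(i) > 0. Then the exponent of the finite abelian group J(B) = ℤ^{1×n}/r(B), the exponent of J(C) = ℤ^{1×n}/r(C), and lcm{m(1),…,m(n)} are all equal. -/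
open Matrix

/-- The row space `r(A)` of a matrix: the subgroup (submodule) of `ℤ^{1×n}`
consisting of all `v * A`. -/
def rowSpace {m n : ℕ} (A : Matrix (Fin m) (Fin n) ℤ) : Submodule ℤ (Fin n → ℤ) :=
  LinearMap.range A.vecMulLinear

/-- Key lemma: if every column of `C` is unimodular and `Cᵀ * B = diagonal m` with all
`m i > 0`, then the exponent of `ℤⁿ / r(B)` is `lcm m`. -/
lemma exponent_eq_lcm {n : ℕ} (B C : Matrix (Fin n) (Fin n) ℤ)
    (hCcol : ∀ j : Fin n, Finset.univ.gcd (fun i => C i j) = 1)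
    (m : Fin n → ℤ) (hm : ∀ i, 0 < m i)
    (h : Cᵀ * B = Matrix.diagonal m) :
    (AddMonoid.exponent ((Fin n → ℤ) ⧸ rowSpace B) : ℤ) = Finset.univ.lcm m := by
  set L : ℤ := Finset.univ.lcm m with hLdef
  have hLnonneg : 0 ≤ L := by
    rw [← Int.nonneg_iff_normalize_eq_self]
    exact Finset.normalize_lcm
  have hLne : L ≠ 0 := by
    intro h0
    rcases (Finset.lcm_eq_zero_iff).mp h0 with ⟨i, _, hi⟩
    exact absurd hi.symm (hm i).ne
  have hLpos : 0 < L := lt_of_le_of_ne hLnonneg (Ne.symm hLne)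
  -- determinant of B is nonzero
  have hdet : B.det ≠ 0 := by
    intro h0
    have := congrArg Matrix.det h
    rw [Matrix.det_mul, h0, mul_zero, Matrix.det_diagonal] at this
    exact absurd this.symm (ne_of_gt (Finset.prod_pos fun i _ => hm i))
  -- vecMul injectivity
  have hinj : ∀ w : Fin n → ℤ, w ᵥ* B = 0 → w = 0 := by
    intro w hw
    have h1 : w ᵥ* (B * B.adjugate) = 0 := by
      rw [← Matrix.vecMul_vecMul, hw]
      simp [Matrix.vecMul]
    rw [Matrix.mul_adjugate, Matrix.smul_eq_diagonal_mul, Matrix.mul_one, Matrix.vecMul_diagonal_const] at h1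
    funext k
    have h3 := congrFun h1 k
    simp only [MulOpposite.smul_eq_mul_unop, MulOpposite.unop_op, Pi.smul_apply, Pi.zero_apply,
      smul_eq_mul] at h3
    rcases mul_eq_zero.mp h3 with h4 | h4
    · exact h4
    · exact absurd h4 hdet
  set E : ℕ := AddMonoid.exponent ((Fin n → ℤ) ⧸ rowSpace B) with hEdef
  -- direction 1 : E ∣ L.toNat
  have hdvd1 : E ∣ L.toNat := by
    apply AddMonoid.exponent_dvd_of_forall_nsmul_eq_zero
    intro x
    obtain ⟨v, rfl⟩ := Submodule.Quotient.mk_surjective _ x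
    rw [← Submodule.Quotient.mk_smul, Submodule.Quotient.mk_eq_zero]
    refine ⟨v ᵥ* (Matrix.diagonal (fun i => L / m i) * Cᵀ), ?_⟩
    show (v ᵥ* (Matrix.diagonal (fun i => L / m i) * Cᵀ)) ᵥ* B = (L.toNat : ℕ) • v
    rw [Matrix.vecMul_vecMul, Matrix.mul_assoc, h, Matrix.diagonal_mul_diagonal]
    have : (fun i => L / m i * m i) = fun _ : Fin n => L := by
      funext i
      exact Int.ediv_mul_cancel (Finset.dvd_lcm (Finset.mem_univ i))
    rw [this]
    funext k
    rw [Matrix.vecMul_diagonal]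
    have : (L.toNat • v) k = (L.toNat : ℤ) * v k := by
      simp
    rw [this, Int.toNat_of_nonneg hLnonneg, mul_comm]
  have hEne : E ≠ 0 := by
    intro h0
    rw [h0] at hdvd1
    have : L.toNat = 0 := Nat.eq_zero_of_zero_dvd hdvd1
    omega
  -- direction 2 : for each i, m i ∣ E
  have hdvd2 : ∀ i : Fin n, m i ∣ (E : ℤ) := by
    intro i
    have hx : (E : ℕ) • (Submodule.Quotient.mk ((Pi.single i (1:ℤ) : Fin n → ℤ)) :
        (Fin n → ℤ) ⧸ rowSpace B) = 0 := AddMonoid.exponent_nsmul_eq_zero _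
    rw [← Submodule.Quotient.mk_smul, Submodule.Quotient.mk_eq_zero] at hx
    obtain ⟨v, hv⟩ := hx
    have hv' : v ᵥ* B = (E : ℤ) • (Pi.single i (1:ℤ) : Fin n → ℤ) := by
      have : (E : ℕ) • (Pi.single i (1:ℤ) : Fin n → ℤ) = (E : ℤ) • (Pi.single i (1:ℤ) : Fin n → ℤ) := by
        rw [natCast_zsmul]
      rw [← this]; exact hv
    set c : Fin n → ℤ := fun j => C j i with hcdef
    have hc : c ᵥ* B = m i • (Pi.single i (1:ℤ) : Fin n → ℤ) := by
      funext k
      have h1 : (c ᵥ* B) k = (Cᵀ * B) i k := by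
        simp [Matrix.vecMul, Matrix.mul_apply, dotProduct, hcdef, Matrix.transpose_apply]
      rw [h1, h]
      simp [Matrix.diagonal, Pi.single_apply, eq_comm]
    have key : (m i • v) ᵥ* B = ((E : ℤ) • c) ᵥ* B := by
      rw [Matrix.smul_vecMul, Matrix.smul_vecMul, hv', hc, smul_smul, smul_smul, mul_comm]
    have hzero : (m i • v - (E : ℤ) • c) ᵥ* B = 0 := by
      rw [Matrix.sub_vecMul, key, sub_self]
    have heq : m i • v = (E : ℤ) • c := by
      have := hinj _ hzero
      exact sub_eq_zero.mp this
    have hdvdall : ∀ j ∈ Finset.univ, m i ∣ (E : ℤ) * c j := by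
      intro j _
      have : (E : ℤ) * c j = m i * v j := by
        have := congrFun heq j
        simpa [mul_comm] using this.symm
      rw [this]
      exact Dvd.intro _ rfl
    have hgcd : Finset.univ.gcd (fun j => (E : ℤ) * c j) = (E : ℤ) := by
      rw [Finset.gcd_mul_left, hCcol i, mul_one, Int.normalize_coe_nat]
    have := Finset.dvd_gcd hdvdall
    rwa [hgcd] at this
  have hdvd2' : L ∣ (E : ℤ) := Finset.lcm_dvd fun i _ => hdvd2 i
  have hdvd1' : (E : ℤ) ∣ L := by
    have := Int.natCast_dvd_natCast.mpr hdvd1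
    rwa [Int.toNat_of_nonneg hLnonneg] at this
  exact Int.dvd_antisymm (Int.natCast_nonneg E) hLnonneg hdvd1' hdvd2'

theorem stmt2 {n : ℕ} (B C : Matrix (Fin n) (Fin n) ℤ)
    (hB : WeaklyNonsingular B) (hC : WeaklyNonsingular C)
    (m : Fin n → ℤ) (hm : ∀ i, 0 < m i)
    (h : Cᵀ * B = Matrix.diagonal m) :
    AddMonoid.exponent ((Fin n → ℤ) ⧸ rowSpace B)
        = AddMonoid.exponent ((Fin n → ℤ) ⧸ rowSpace C)
      ∧ (AddMonoid.exponent ((Fin n → ℤ) ⧸ rowSpace B) : ℤ) = Finset.univ.lcm m := by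
  have h' : Bᵀ * C = Matrix.diagonal m := by
    have := congrArg Matrix.transpose h
    rwa [Matrix.transpose_mul, Matrix.transpose_transpose, Matrix.diagonal_transpose] at this
  have e1 := exponent_eq_lcm B C hC.2 m hm h
  have e2 := exponent_eq_lcm C B hB.2 m hm h'
  refine ⟨?_, e1⟩
  have : (AddMonoid.exponent ((Fin n → ℤ) ⧸ rowSpace B) : ℤ)
      = (AddMonoid.exponent ((Fin n → ℤ) ⧸ rowSpace C) : ℤ) := by rw [e1, e2]
  exact_mod_cast this
end

section
/- Let 0 → A →f B →g C → 0 be a short exact sequence of finite abelian groups (f injective, g surjective, and the range of f equals the kernel of g). If (a) Exp B = Exp A and A is cyclic, or (b) Exp B = Exp C and C is cyclic, or (c) Exp B is square-free, then the sequence splits: there exists a group homomorphism s : C → B with g ∘ s = id_C. -/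
/-- A retraction of the injection yields a section of the surjection. -/
lemma aux_sec_of_retr {A B C : Type} [AddCommGroup A] [AddCommGroup B] [AddCommGroup C]
    (f : A →+ B) (g : B →+ C) (hg : Function.Surjective g) (hfg : f.range = g.ker)
    (r : B →+ A) (hr : r.comp f = AddMonoidHom.id A) :
    ∃ s : C →+ B, g.comp s = AddMonoidHom.id C := by
  set π : B →+ B := AddMonoidHom.id B - f.comp r with hπ
  have hker : ∀ b : B, g b = 0 → π b = 0 := by
    intro b hb
    have : b ∈ f.range := by rw [hfg]; exact hb
    obtain ⟨a, rfl⟩ := this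
    simp only [hπ, AddMonoidHom.sub_apply, AddMonoidHom.id_apply, AddMonoidHom.comp_apply]
    have := congrArg (fun h : A →+ A => f (h a)) hr
    simp only [AddMonoidHom.comp_apply, AddMonoidHom.id_apply] at this
    rw [this, sub_self]
  have hgπ : ∀ b : B, g (π b) = g b := by
    intro b
    simp only [hπ, AddMonoidHom.sub_apply, AddMonoidHom.id_apply, AddMonoidHom.comp_apply,
      map_sub]
    have : f (r b) ∈ g.ker := by rw [← hfg]; exact ⟨r b, rfl⟩
    rw [AddMonoidHom.mem_ker] at this
    rw [this, sub_zero]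
  refine ⟨AddMonoidHom.mk' (fun c => π (Function.surjInv hg c)) ?_, ?_⟩
  · intro c₁ c₂
    have : π (Function.surjInv hg (c₁ + c₂) - Function.surjInv hg c₁ - Function.surjInv hg c₂)
        = 0 := by
      apply hker
      simp [map_sub, Function.surjInv_eq hg]
    rw [map_sub, map_sub, sub_eq_zero, sub_eq_iff_eq_add] at this
    show π (Function.surjInv hg (c₁ + c₂)) = π (Function.surjInv hg c₁) + π (Function.surjInv hg c₂)
    rw [this]; abel
  · ext c
    simp only [AddMonoidHom.comp_apply, AddMonoidHom.mk'_apply, AddMonoidHom.id_apply]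
    rw [hgπ, Function.surjInv_eq hg]

/-- `ZMod n` is self-injective (Baer's criterion). -/
lemma aux_zmod_baer (n : ℕ) [NeZero n] : Module.Baer (ZMod n) (ZMod n) := by
  intro I gI
  haveI : IsPrincipalIdealRing (ZMod n) :=
    IsPrincipalIdealRing.of_surjective (Int.castRingHom (ZMod n)) ZMod.intCast_surjective
  obtain ⟨d, hd⟩ : I.IsPrincipal := inferInstance
  have hdmem : d ∈ I := hd ▸ Ideal.subset_span rfl
  set y := gI ⟨d, hdmem⟩ with hy
  set a := d.val with ha
  have hda : ((a : ℕ) : ZMod n) = d := ZMod.natCast_rightInverse d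
  set G := Nat.gcd a n with hG
  have hGn : G ∣ n := Nat.gcd_dvd_right a n
  have hGa : G ∣ a := Nat.gcd_dvd_left a n
  have hnpos : 0 < n := Nat.pos_of_ne_zero (NeZero.ne n)
  have hGpos : 0 < G := Nat.gcd_pos_of_pos_right a hnpos
  have h1 : ((n / G : ℕ) : ZMod n) * d = 0 := by
    rw [← hda, ← Nat.cast_mul]
    have e1 : a = G * (a / G) := (Nat.mul_div_cancel' hGa).symm
    have e2 : n = G * (n / G) := (Nat.mul_div_cancel' hGn).symm
    have : n / G * a = a / G * n := by
      calc n / G * a = n / G * (G * (a / G)) := by rw [← e1]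
        _ = a / G * (G * (n / G)) := by ring
        _ = a / G * n := by rw [← e2]
    rw [this, Nat.cast_mul, ZMod.natCast_self, mul_zero]
  have h2 : ((n / G : ℕ) : ZMod n) * y = 0 := by
    have : ((n / G : ℕ) : ZMod n) • (⟨d, hdmem⟩ : I) = (0 : I) := by
      ext
      simpa using h1
    calc ((n / G : ℕ) : ZMod n) * y = gI (((n / G : ℕ) : ZMod n) • ⟨d, hdmem⟩) := by
          rw [map_smul]; rfl
      _ = 0 := by rw [this, map_zero]
  have h3 : G ∣ y.val := by
    have : (n : ℕ) ∣ (n / G) * y.val := by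
      have := h2
      rw [← ZMod.natCast_rightInverse y, ← Nat.cast_mul] at this
      exact (ZMod.natCast_eq_zero_iff _ n).mp this
    have hnG : n = G * (n / G) := (Nat.mul_div_cancel' hGn).symm
    obtain ⟨k, hk⟩ := this
    have hk2 : (n / G) * y.val = (n / G) * (G * k) := by
      rw [hk]; conv_lhs => rw [hnG]
      ring
    have hnGpos : 0 < n / G := Nat.div_pos (Nat.le_of_dvd hnpos hGn) hGpos
    have := Nat.eq_of_mul_eq_mul_left hnGpos hk2
    exact ⟨k, this⟩
  obtain ⟨t, ht⟩ := h3
  have hbez : ((G : ℕ) : ZMod n) = d * ((Nat.gcdA a n : ℤ) : ZMod n) := by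
    have := Nat.gcd_eq_gcd_ab a n
    have h4 : ((Nat.gcd a n : ℤ) : ZMod n)
        = ((a : ℤ) * Nat.gcdA a n + (n : ℤ) * Nat.gcdB a n : ℤ) := by
      exact_mod_cast congrArg (fun z : ℤ => ((z : ZMod n))) this
    push_cast at h4
    rw [ZMod.natCast_self] at h4
    simp only [zero_mul, add_zero] at h4
    rw [← hG] at h4
    rw [h4, hda]
  set u := ((Nat.gcdA a n : ℤ) : ZMod n) with hu
  have hyval : y = d * (u * (t : ZMod n)) := by
    have : y = ((y.val : ℕ) : ZMod n) := (ZMod.natCast_rightInverse y).symm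
    rw [this, ht, Nat.cast_mul, hbez, mul_assoc]
  refine ⟨LinearMap.toSpanSingleton (ZMod n) (ZMod n) (u * (t : ZMod n)), ?_⟩
  intro x hx
  have hx' : x ∈ Submodule.span (ZMod n) {d} := hd ▸ hx
  obtain ⟨c, hc⟩ := Ideal.mem_span_singleton'.mp hx'
  have : gI ⟨x, hx⟩ = c * y := by
    have : (⟨x, hx⟩ : I) = c • ⟨d, hdmem⟩ := by ext; simp [← hc, smul_eq_mul]
    rw [this, map_smul]; rfl
  rw [this, hyval, LinearMap.toSpanSingleton_apply]
  rw [smul_eq_mul, ← hc]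
  ring

/-- Case (a) core: retraction from self-injectivity of `ZMod n`. -/
lemma aux_retr_of_cyclic {A B : Type} [AddCommGroup A] [AddCommGroup B] (n : ℕ) [NeZero n]
    [Module (ZMod n) A] [Module (ZMod n) B]
    (f : A →+ B) (hf : Function.Injective f) (eA : ZMod n ≃+ A) :
    ∃ r : B →+ A, r.comp f = AddMonoidHom.id A := by
  let gl : A →ₗ[ZMod n] ZMod n := (eA.symm.toAddMonoidHom).toZModLinearMap n
  let fl : A →ₗ[ZMod n] B := f.toZModLinearMap n
  obtain ⟨h, hcomp⟩ := (aux_zmod_baer n).extension_property fl hf gl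
  refine ⟨eA.toAddMonoidHom.comp h.toAddMonoidHom, ?_⟩
  ext a
  have hfa := LinearMap.congr_fun hcomp a
  simp only [AddMonoidHom.comp_apply, AddMonoidHom.id_apply, AddEquiv.coe_toAddMonoidHom,
    LinearMap.toAddMonoidHom_coe, LinearMap.comp_apply] at hfa ⊢
  rw [show fl a = f a from rfl] at hfa
  rw [show (gl : A → ZMod n) a = eA.symm a from rfl] at hfa
  rw [hfa, AddEquiv.apply_symm_apply]

/-- Case (c) core: retraction from semisimplicity. -/
lemma aux_retr_of_semisimple {A B : Type} [AddCommGroup A] [AddCommGroup B] (n : ℕ) [NeZero n]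
    [Module (ZMod n) B] [IsSemisimpleModule (ZMod n) B]
    (f : A →+ B) (hf : Function.Injective f) :
    ∃ r : B →+ A, r.comp f = AddMonoidHom.id A := by
  set p : Submodule (ZMod n) B := AddSubgroup.toZModSubmodule n f.range with hp
  obtain ⟨q, hq⟩ := exists_isCompl p
  let proj := Submodule.linearProjOfIsCompl p q hq
  let j : ↥p →+ f.range := AddMonoidHom.mk'
    (fun x => ⟨x.1, (AddSubgroup.mem_toZModSubmodule n).mp x.2⟩) (fun x y => rfl)
  let r : B →+ A := ((AddMonoidHom.ofInjective hf).symm.toAddMonoidHom).comp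
    (j.comp proj.toAddMonoidHom)
  refine ⟨r, ?_⟩
  ext a
  apply hf
  have hmem : f a ∈ p := (AddSubgroup.mem_toZModSubmodule n).mpr ⟨a, rfl⟩
  have h1 : proj (f a) = ⟨f a, hmem⟩ := Submodule.linearProjOfIsCompl_apply_left hq ⟨f a, hmem⟩
  simp only [r, AddMonoidHom.comp_apply, AddMonoidHom.id_apply, AddEquiv.coe_toAddMonoidHom,
    LinearMap.toAddMonoidHom_coe]
  rw [h1]
  have : j ⟨f a, hmem⟩ = ⟨f a, ⟨a, rfl⟩⟩ := rfl
  rw [this]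
  exact AddMonoidHom.apply_ofInjective_symm hf _

/-- Case (b): direct construction of a section when `C` is cyclic of full exponent. -/
lemma aux_case_b {B C : Type} [AddCommGroup B] [AddCommGroup C] [Finite B] [Finite C]
    (g : B →+ C) (hg : Function.Surjective g)
    (hexp : AddMonoid.exponent B = AddMonoid.exponent C) (hC : IsAddCyclic C) :
    ∃ s : C →+ B, g.comp s = AddMonoidHom.id C := by
  have : (0 : ℕ) < Nat.card C := Nat.card_pos
  haveI : NeZero (Nat.card C) := ⟨this.ne'⟩
  set n := Nat.card C with hn
  have hexpC : AddMonoid.exponent C = n := IsAddCyclic.exponent_eq_card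
  let eC : ZMod n ≃+ C := zmodAddCyclicAddEquiv hC
  obtain ⟨b₀, hb₀⟩ := hg (eC 1)
  have hord : n • b₀ = 0 := by
    have h1 : AddMonoid.exponent B • b₀ = 0 := AddMonoid.exponent_nsmul_eq_zero b₀
    rwa [hexp, hexpC] at h1
  have hb' : (zmultiplesHom B b₀) (n : ℤ) = 0 := by
    simp [zmultiplesHom_apply, natCast_zsmul, hord]
  let ψ : ZMod n →+ B := ZMod.lift n ⟨zmultiplesHom B b₀, hb'⟩
  have hψ1 : ψ 1 = b₀ := by
    have : ((1 : ℤ) : ZMod n) = 1 := by norm_num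
    rw [← this]
    simp only [ψ, ZMod.lift_coe, zmultiplesHom_apply, one_zsmul]
  have key : ∀ x : ZMod n, g (ψ x) = eC x := by
    intro x
    have hx : ((x.val : ℕ) : ZMod n) = x := ZMod.natCast_rightInverse x
    calc g (ψ x) = g (ψ (x.val • (1 : ZMod n))) := by rw [nsmul_eq_mul, mul_one, hx]
    _ = x.val • g (ψ 1) := by rw [map_nsmul, map_nsmul]
    _ = x.val • eC 1 := by rw [hψ1, hb₀]
    _ = eC (x.val • (1 : ZMod n)) := by rw [map_nsmul]
    _ = eC x := by rw [nsmul_eq_mul, mul_one, hx]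
  refine ⟨ψ.comp eC.symm.toAddMonoidHom, ?_⟩
  ext c
  simp only [AddMonoidHom.comp_apply, AddMonoidHom.id_apply, AddEquiv.coe_toAddMonoidHom]
  rw [key, AddEquiv.apply_symm_apply]

theorem stmt3 {A B C : Type} [AddCommGroup A] [AddCommGroup B] [AddCommGroup C]
    [Finite A] [Finite B] [Finite C]
    (f : A →+ B) (g : B →+ C)
    (hf : Function.Injective f) (hg : Function.Surjective g)
    (hfg : f.range = g.ker)
    (hcase :
      (AddMonoid.exponent B = AddMonoid.exponent A ∧ IsAddCyclic A) ∨
      (AddMonoid.exponent B = AddMonoid.exponent C ∧ IsAddCyclic C) ∨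
      Squarefree (AddMonoid.exponent B)) :
    ∃ s : C →+ B, g.comp s = AddMonoidHom.id C := by
  rcases hcase with ⟨hexp, hA⟩ | ⟨hexp, hC⟩ | hsq
  · -- case (a)
    haveI : NeZero (Nat.card A) := ⟨Nat.card_pos.ne'⟩
    set n := Nat.card A with hn
    have hexpA : AddMonoid.exponent A = n := IsAddCyclic.exponent_eq_card
    have hB0 : ∀ x : B, n • x = 0 := fun x => by
      rw [← hexpA, ← hexp]; exact AddMonoid.exponent_nsmul_eq_zero x
    have hA0 : ∀ x : A, n • x = 0 := fun x => by
      rw [← hexpA]; exact AddMonoid.exponent_nsmul_eq_zero x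
    letI : Module (ZMod n) A := AddCommGroup.zmodModule hA0
    letI : Module (ZMod n) B := AddCommGroup.zmodModule hB0
    obtain ⟨r, hr⟩ := aux_retr_of_cyclic n f hf (zmodAddCyclicAddEquiv hA)
    exact aux_sec_of_retr f g hg hfg r hr
  · exact aux_case_b g hg hexp hC
  · -- case (c)
    set n := AddMonoid.exponent B with hn
    haveI : NeZero n := ⟨AddMonoid.exponent_ne_zero_of_finite⟩
    have hB0 : ∀ x : B, n • x = 0 := fun x => AddMonoid.exponent_nsmul_eq_zero x
    letI : Module (ZMod n) B := AddCommGroup.zmodModule hB0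
    haveI : IsReduced (ZMod n) := isReduced_zmod.mpr (Or.inl hsq)
    haveI : IsSemisimpleRing (ZMod n) := IsArtinianRing.isSemisimpleRing_of_isReduced (ZMod n)
    haveI : IsSemisimpleModule (ZMod n) B := IsSemisimpleRing.isSemisimpleModule
    obtain ⟨r, hr⟩ := @aux_retr_of_semisimple A B _ _ n ‹_› ‹_› ‹_› f hf
    exact aux_sec_of_retr f g hg hfg r hr
end

section
/- Let H be a subgroup of ℤ^n such that ℤ^n/H is finite, with invariant factors f_1, f_2, …, f_n: that is, each f_i ≥ 1, f_i divides f_{i+1} for all i < n, and ℤ^n/H ≅ ⊕_{i=1}^{n} ℤ/f_iℤ. If x ∈ ℤ^n is such that x + H has additive order f_n in ℤ^n/H, then ℤ^n/(H + ℤx) ≅ ⊕_{i=1}^{n-1} ℤ/f_iℤ. -/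
open AddSubgroup QuotientAddGroup

def shearEquiv {A : Type*} [AddCommGroup A] (L : A →+ A) (h : ∀ y, L (L y) = 0) : A ≃+ A where
  toFun y := y + L y
  invFun y := y - L y
  left_inv y := by simp [map_add, h y]
  right_inv y := by simp [map_sub, h y]
  map_add' y z := by simp [map_add]; abel

@[simp] lemma shearEquiv_apply {A : Type*} [AddCommGroup A] (L : A →+ A)
    (h : ∀ y, L (L y) = 0) (y : A) : shearEquiv L h y = y + L y := rfl


lemma bez {ι : Type*} [DecidableEq ι] (S : Finset ι) (w : ι → ℕ) :
    ∃ c : ι → ℤ, ((S.gcd w : ℕ) : ℤ) = ∑ j ∈ S, c j * w j := by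
  classical
  induction S using Finset.induction with
  | empty => exact ⟨0, by simp⟩
  | insert a S' ha ih =>
    obtain ⟨c, hc⟩ := ih
    refine ⟨fun j => if j = a then Nat.gcdA (w a) (S'.gcd w)
      else Nat.gcdB (w a) (S'.gcd w) * c j, ?_⟩
    rw [Finset.gcd_insert, Finset.sum_insert ha]
    have : GCDMonoid.gcd (w a) (S'.gcd w) = Nat.gcd (w a) (S'.gcd w) := rfl
    rw [this, Nat.gcd_eq_gcd_ab]
    simp only [if_pos rfl]
    rw [Finset.sum_congr rfl (fun j hj => by rw [if_neg (by rintro rfl; exact ha hj)])]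
    push_cast
    rw [show ∑ j ∈ S', Nat.gcdB (w a) (S'.gcd w) * c j * (w j : ℤ)
        = Nat.gcdB (w a) (S'.gcd w) * ∑ j ∈ S', c j * (w j : ℤ) by
      rw [Finset.mul_sum]; exact Finset.sum_congr rfl fun j _ => by ring]
    rw [← hc]; ring


lemma avoid {F D a : ℕ} (hF : 0 < F) (h : Nat.Coprime D a) :
    ∃ s : ℕ, Nat.Coprime (a + D * s) F := by
  classical
  refine ⟨∏ p ∈ F.primeFactors.filter (fun p => ¬ p ∣ a), p, ?_⟩
  set s := ∏ p ∈ F.primeFactors.filter (fun p => ¬ p ∣ a), p with hs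
  rw [Nat.coprime_iff_gcd_eq_one]
  by_contra hg
  obtain ⟨p, hp, hpd⟩ := Nat.exists_prime_and_dvd hg
  have hpv : p ∣ a + D * s := hpd.trans (Nat.gcd_dvd_left _ _)
  have hpF : p ∣ F := hpd.trans (Nat.gcd_dvd_right _ _)
  by_cases hpa : p ∣ a
  · have hds : p ∣ D * s := (Nat.dvd_add_right hpa).mp hpv
    rcases (Nat.Prime.dvd_mul hp).mp hds with hD | hS
    · have h1 : p ∣ 1 := h ▸ Nat.dvd_gcd hD hpa
      exact hp.one_lt.ne' (Nat.dvd_one.mp h1)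
    · -- p divides product of primes not dividing a
      obtain ⟨q, hq, hpq⟩ := (Nat.Prime.prime hp).exists_mem_finset_dvd hS
      have hq' := Finset.mem_filter.mp hq
      have : p = q := (Nat.prime_dvd_prime_iff_eq hp (Nat.prime_of_mem_primeFactors hq'.1)).mp hpq
      exact hq'.2 (this ▸ hpa)
  · have hps : p ∣ s := Finset.dvd_prod_of_mem _ (Finset.mem_filter.mpr
      ⟨Nat.mem_primeFactors.mpr ⟨hp, hpF, hF.ne'⟩, hpa⟩)
    exact hpa ((Nat.dvd_add_right (Dvd.dvd.mul_left hps D)).mp (by rwa [Nat.add_comm] at hpv))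

lemma key {n : ℕ} (hn : 0 < n) (f : Fin n → ℕ) (hf1 : ∀ i, 1 ≤ f i)
    (hdiv : ∀ i j : Fin n, i ≤ j → f i ∣ f j)
    (g : (i : Fin n) → ZMod (f i))
    (hg : addOrderOf g = f ⟨n - 1, Nat.sub_lt hn Nat.one_pos⟩) :
    Nonempty ((((i : Fin n) → ZMod (f i)) ⧸ AddSubgroup.zmultiples g)
      ≃+ ((i : Fin (n - 1)) → ZMod (f (Fin.castLE (Nat.sub_le n 1) i)))) := by
  classical
  haveI : ∀ i, NeZero (f i) := fun i => ⟨by have := hf1 i; omega⟩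
  set last : Fin n := ⟨n - 1, Nat.sub_lt hn Nat.one_pos⟩ with hlast
  have hF : 0 < f last := hf1 last
  have hfdvd : ∀ j, f j ∣ f last := fun j => hdiv j last (by
    rw [Fin.le_def]; have := j.2; simp only [hlast]; omega)
  set a : Fin n → ℕ := fun j => (f last / f j) * (g j).val with ha
  set S : Finset (Fin n) := Finset.univ.erase last with hS
  set D : ℕ := Nat.gcd (f last) (S.gcd a) with hD
  -- the total gcd is 1
  have hcop : Nat.Coprime D (a last) := by
    set e : ℕ := Nat.gcd D (a last) with he
    have heF : e ∣ f last := (Nat.gcd_dvd_left D _).trans (Nat.gcd_dvd_left _ _)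
    have hepos : 0 < e := Nat.gcd_pos_of_pos_left _ (Nat.gcd_pos_of_pos_left _ hF)
    have hea : ∀ j, e ∣ a j := by
      intro j
      by_cases hj : j = last
      · subst hj; exact Nat.gcd_dvd_right _ _
      · exact (Nat.gcd_dvd_left _ _).trans ((Nat.gcd_dvd_right _ _).trans
          (Finset.gcd_dvd (by simp [hS, hj])))
    have hsm : (f last / e) • g = 0 := by
      funext j
      rw [Pi.smul_apply, Pi.zero_apply, ← ZMod.natCast_zmod_val (g j),
        nsmul_eq_mul, ← Nat.cast_mul, ZMod.natCast_eq_zero_iff]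
      have h2 : f last / e * (g j).val * e = f j * a j := by
        rw [mul_right_comm, Nat.div_mul_cancel heF, ha]
        rw [← mul_assoc, Nat.mul_div_cancel' (hfdvd j)]
      rw [← Nat.mul_dvd_mul_iff_right hepos, h2]
      exact Nat.mul_dvd_mul_left _ (hea j)
    have hdvd1 : f last ∣ f last / e := by
      have h3 := addOrderOf_dvd_of_nsmul_eq_zero hsm
      rwa [hg] at h3
    have heq : f last / e = f last := Nat.dvd_antisymm (Nat.div_dvd_of_dvd heF) hdvd1
    have he1 : e = 1 := by
      rcases Nat.div_eq_self.mp heq with h' | h'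
      · omega
      · exact h'
    exact he1
  obtain ⟨s, hs⟩ : ∃ s : ℕ, Nat.Coprime (a last + D * s) (f last) := avoid hF hcop
  set v : ℕ := a last + D * s with hv
  set u : (ZMod (f last))ˣ := ZMod.unitOfCoprime v hs with hu
  -- Bezout coefficients
  obtain ⟨c', hsum⟩ : ∃ c' : Fin n → ℤ,
      ∑ j ∈ S, c' j * a j = (D * s : ℤ) - (f last) * (Nat.gcdA (f last) (S.gcd a) * s) := by
    obtain ⟨c, hc⟩ := bez S a
    refine ⟨fun j => Nat.gcdB (f last) (S.gcd a) * s * c j, ?_⟩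
    have h1 : ∑ j ∈ S, (Nat.gcdB (f last) (S.gcd a) * (s : ℤ) * c j) * a j
        = Nat.gcdB (f last) (S.gcd a) * s * ∑ j ∈ S, c j * a j := by
      rw [Finset.mul_sum]
      exact Finset.sum_congr rfl fun j _ => by ring
    rw [h1, ← hc]
    have h2 := Nat.gcd_eq_gcd_ab (f last) (S.gcd a)
    rw [← hD] at h2
    linear_combination (-(s : ℤ)) * h2
  -- the homs ZMod (f j) →+ ZMod (f last)
  set h : (j : Fin n) → (ZMod (f j) →+ ZMod (f last)) := fun j =>
    ZMod.lift (f j) ⟨zmultiplesHom _ (((f last / f j : ℕ) : ZMod (f last))), by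
      simp only [zmultiplesHom_apply, natCast_zsmul, ← Nat.cast_smul_eq_nsmul (ZMod (f last)),
        smul_eq_mul, ← Nat.cast_mul, Nat.mul_div_cancel' (hfdvd j), ZMod.natCast_self]⟩ with hh
  have heval : ∀ j, h j (g j) = ((a j : ℕ) : ZMod (f last)) := by
    intro j
    conv_lhs => rw [← ZMod.natCast_zmod_val (g j),
      show (((g j).val : ℕ) : ZMod (f j)) = (((g j).val : ℤ) : ZMod (f j)) by push_cast; rfl]
    simp only [hh]
    rw [ZMod.lift_coe, zmultiplesHom_apply, natCast_zsmul, nsmul_eq_mul, ← Nat.cast_mul, ha]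
    rw [mul_comm ((g j).val)]
  set w : ((i : Fin n) → ZMod (f i)) →+ ZMod (f last) :=
    ∑ j ∈ S, c' j • ((h j).comp (Pi.evalAddMonoidHom (fun i => ZMod (f i)) j)) with hw
  have hw0 : ∀ z, w (Pi.single last z) = 0 := by
    intro z
    simp only [hw, AddMonoidHom.finset_sum_apply, AddMonoidHom.smul_apply,
      AddMonoidHom.comp_apply, Pi.evalAddMonoidHom_apply]
    refine Finset.sum_eq_zero fun j hj => ?_
    have hne : j ≠ last := by rw [hS] at hj; exact Finset.ne_of_mem_erase hj
    rw [Pi.single_eq_of_ne hne, map_zero, smul_zero]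
  have hwg : w g = ((D * s : ℤ) : ZMod (f last)) := by
    simp only [hw, AddMonoidHom.finset_sum_apply, AddMonoidHom.smul_apply,
      AddMonoidHom.comp_apply, Pi.evalAddMonoidHom_apply, heval]
    have h4 : ∀ j ∈ S, c' j • ((a j : ℕ) : ZMod (f last)) = ((c' j * a j : ℤ) : ZMod (f last)) := by
      intro j _
      rw [zsmul_eq_mul]
      push_cast
      ring
    rw [Finset.sum_congr rfl h4, ← Int.cast_sum, hsum]
    push_cast
    rw [ZMod.natCast_self]
    ring
  set L1 : ((i : Fin n) → ZMod (f i)) →+ ((i : Fin n) → ZMod (f i)) :=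
    (AddMonoidHom.single (fun i => ZMod (f i)) last).comp w with hL1
  have hL1sq : ∀ y, L1 (L1 y) = 0 := fun y => by
    simp only [hL1, AddMonoidHom.comp_apply, AddMonoidHom.single_apply, hw0, Pi.single_zero]
  set α := shearEquiv L1 hL1sq with hα
  set g1 := α g with hg1
  have hg1last : g1 last = ((u : ZMod (f last))) := by
    rw [hg1, hα, shearEquiv_apply, Pi.add_apply, hL1, AddMonoidHom.comp_apply,
      AddMonoidHom.single_apply, Pi.single_eq_same, hwg, hu, ZMod.coe_unitOfCoprime, hv]
    have h6 : (a last : ℕ) = (g last).val := by simp [ha, Nat.div_self hF]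
    rw [← ZMod.natCast_zmod_val (g last), ← h6]
    push_cast
    ring
  have hg1j : ∀ j ∈ S, g1 j = g j := by
    intro j hj
    have hne : j ≠ last := Finset.ne_of_mem_erase hj
    simp [hg1, hα, hL1, Pi.single_eq_of_ne hne]
  -- second shear
  set k : (j : Fin n) → (ZMod (f last) →+ ZMod (f j)) := fun j =>
    (AddMonoidHom.mulLeft (g1 j * (ZMod.castHom (hfdvd j) (ZMod (f j))
      ((u⁻¹ : (ZMod (f last))ˣ) : ZMod (f last))))).comp
      (ZMod.castHom (hfdvd j) (ZMod (f j))).toAddMonoidHom with hk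
  set P : ZMod (f last) →+ ((i : Fin n) → ZMod (f i)) :=
    ∑ j ∈ S, (AddMonoidHom.single (fun i => ZMod (f i)) j).comp (k j) with hP
  have hPlast : ∀ z, P z last = 0 := by
    intro z
    simp only [hP, AddMonoidHom.finset_sum_apply, AddMonoidHom.comp_apply,
      AddMonoidHom.single_apply, Finset.sum_apply]
    refine Finset.sum_eq_zero fun j hj => Pi.single_eq_of_ne ?_ _
    rw [hS] at hj
    exact (Finset.ne_of_mem_erase hj).symm
  set L2 : ((i : Fin n) → ZMod (f i)) →+ ((i : Fin n) → ZMod (f i)) :=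
    -(P.comp (Pi.evalAddMonoidHom (fun i => ZMod (f i)) last)) with hL2
  have hL2sq : ∀ y, L2 (L2 y) = 0 := by
    intro y
    simp only [hL2, AddMonoidHom.neg_apply, AddMonoidHom.comp_apply, Pi.evalAddMonoidHom_apply,
      Pi.neg_apply, hPlast, neg_zero, map_zero]
  set γ := shearEquiv L2 hL2sq with hγ
  have hg2 : γ g1 = Pi.single last ((u : ZMod (f last))) := by
    funext j
    rw [hγ, shearEquiv_apply, Pi.add_apply, hL2, AddMonoidHom.neg_apply,
      AddMonoidHom.comp_apply, Pi.evalAddMonoidHom_apply, hg1last, Pi.neg_apply]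
    by_cases hj : j = last
    · subst hj
      rw [hPlast, Pi.single_eq_same, hg1last, neg_zero, add_zero]
    · have hjS : j ∈ S := by simp [hS, hj]
      have hP : P ((u : ZMod (f last))) j = g1 j := by
        simp only [hP, AddMonoidHom.finset_sum_apply, AddMonoidHom.comp_apply,
          Finset.sum_apply]
        rw [Finset.sum_eq_single j]
        · rw [AddMonoidHom.single_apply, Pi.single_eq_same, hk, AddMonoidHom.comp_apply]
          show g1 j * _ * _ = g1 j
          rw [mul_assoc,
            show ((ZMod.castHom (hfdvd j) (ZMod (f j))).toAddMonoidHom) ((u : ZMod (f last)))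
              = (ZMod.castHom (hfdvd j) (ZMod (f j))) ((u : ZMod (f last))) from rfl,
            ← map_mul, Units.inv_mul, map_one, mul_one]
        · intro j' _ hne
          rw [AddMonoidHom.single_apply, Pi.single_eq_of_ne hne.symm]
        · intro hjn
          exact absurd hjS hjn
      rw [hP, Pi.single_eq_of_ne hj, add_neg_cancel]
  -- assemble
  have e1 : (((i : Fin n) → ZMod (f i)) ⧸ AddSubgroup.zmultiples g)
      ≃+ (((i : Fin n) → ZMod (f i)) ⧸ AddSubgroup.zmultiples
          (Pi.single last ((u : ZMod (f last))))) := by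
    refine QuotientAddGroup.congr _ _ (α.trans γ) ?_
    rw [← hg2]
    have : (AddSubgroup.zmultiples g).map (α.trans γ : _ →+ _)
        = AddSubgroup.zmultiples ((α.trans γ) g) := AddMonoidHom.map_zmultiples _ _
    exact this
  set π : ((i : Fin n) → ZMod (f i)) →+ ((i : Fin (n - 1)) → ZMod (f (Fin.castLE (Nat.sub_le n 1) i))) :=
    AddMonoidHom.mk' (fun y i => y (Fin.castLE (Nat.sub_le n 1) i)) (fun y z => rfl) with hπ
  have hπs : Function.Surjective π := by
    intro z
    refine ⟨fun j => if hj : (j : ℕ) < n - 1 then z ⟨j.1, hj⟩ else 0, ?_⟩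
    funext i
    simp only [hπ, AddMonoidHom.mk'_apply]
    rw [dif_pos (show ((Fin.castLE (Nat.sub_le n 1) i : Fin n) : ℕ) < n - 1 from i.2)]
    rfl
  have hker : π.ker = AddSubgroup.zmultiples (Pi.single last ((u : ZMod (f last)))) := by
    apply le_antisymm
    · intro y hy
      have hy' : ∀ i : Fin (n - 1), y (Fin.castLE (Nat.sub_le n 1) i) = 0 := by
        intro i
        have := AddMonoidHom.mem_ker.mp hy
        exact congrFun this i
      refine AddSubgroup.mem_zmultiples_iff.mpr
        ⟨((y last * ((u⁻¹ : (ZMod (f last))ˣ) : ZMod (f last))).val : ℤ), ?_⟩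
      rw [natCast_zsmul]
      funext j
      by_cases hj : j = last
      · subst hj
        rw [Pi.smul_apply, Pi.single_eq_same, nsmul_eq_mul, ZMod.natCast_zmod_val,
          mul_assoc, Units.inv_mul, mul_one]
      · have hjne : (j : ℕ) ≠ n - 1 := fun h' => hj (Fin.ext h')
        have hjlt : (j : ℕ) < n - 1 := by have := j.2; omega
        have h0 : y j = 0 := hy' ⟨j.1, hjlt⟩
        rw [Pi.smul_apply, Pi.single_eq_of_ne hj, smul_zero, h0]
    · rw [AddSubgroup.zmultiples_le, AddMonoidHom.mem_ker]
      funext i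
      have hne : (Fin.castLE (Nat.sub_le n 1) i : Fin n) ≠ last := by
        intro h'
        have := congrArg Fin.val h'
        simp only [Fin.coe_castLE, hlast] at this
        have := i.2
        omega
      exact Pi.single_eq_of_ne hne _
  exact ⟨e1.trans ((QuotientAddGroup.quotientAddEquivOfEq hker.symm).trans
    (QuotientAddGroup.quotientKerEquivOfSurjective π hπs))⟩

theorem stmt4 {n : ℕ} (hn : 0 < n) (H : AddSubgroup (Fin n → ℤ))
    (hfin : Finite ((Fin n → ℤ) ⧸ H))
    (f : Fin n → ℕ) (hf1 : ∀ i, 1 ≤ f i)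
    (hdiv : ∀ i j : Fin n, i ≤ j → f i ∣ f j)
    (hiso : Nonempty (((Fin n → ℤ) ⧸ H) ≃+ ((i : Fin n) → ZMod (f i))))
    (x : Fin n → ℤ)
    (hx : addOrderOf (QuotientAddGroup.mk x : (Fin n → ℤ) ⧸ H) = f ⟨n - 1, by omega⟩) :
    Nonempty (((Fin n → ℤ) ⧸ (H ⊔ AddSubgroup.zmultiples x))
      ≃+ ((i : Fin (n - 1)) → ZMod (f (Fin.castLE (Nat.sub_le n 1) i)))) := by

  obtain ⟨φ⟩ := hiso
  have hle : H ≤ H ⊔ AddSubgroup.zmultiples x := le_sup_left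
  have hmap : (H ⊔ AddSubgroup.zmultiples x).map (QuotientAddGroup.mk' H)
      = AddSubgroup.zmultiples (QuotientAddGroup.mk x : (Fin n → ℤ) ⧸ H) := by
    rw [AddSubgroup.map_sup, AddMonoidHom.map_zmultiples, QuotientAddGroup.map_mk'_self,
      bot_sup_eq]
    rfl
  have e0 := ((QuotientAddGroup.quotientQuotientEquivQuotient H
    (H ⊔ AddSubgroup.zmultiples x) hle).symm).trans
    (QuotientAddGroup.quotientAddEquivOfEq hmap)
  set g : (i : Fin n) → ZMod (f i) := φ (QuotientAddGroup.mk x) with hgdef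
  have hgord : addOrderOf g = f ⟨n - 1, by omega⟩ := by
    rw [← hx, hgdef]
    exact addOrderOf_injective φ.toAddMonoidHom φ.injective _
  have e1 : ((((Fin n → ℤ) ⧸ H)) ⧸ AddSubgroup.zmultiples
      (QuotientAddGroup.mk x : (Fin n → ℤ) ⧸ H))
      ≃+ ((((i : Fin n) → ZMod (f i))) ⧸ AddSubgroup.zmultiples g) := by
    refine QuotientAddGroup.congr _ _ φ ?_
    have := AddMonoidHom.map_zmultiples (φ : ((Fin n → ℤ) ⧸ H) →+ ((i : Fin n) → ZMod (f i)))
      (QuotientAddGroup.mk x)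
    exact this
  obtain ⟨e2⟩ := key hn f hf1 hdiv g hgord
  exact ⟨(e0.trans e1).trans e2⟩
end

section
/- Let A be an r×n integer matrix of rank r and let B be an n×r integer matrix. Then the sequence 0 → ℤ^{1×r}/ℤ^{1×n}B → ℤ^{1×n}/ℤ^{1×n}BA → ℤ^{1×n}/ℤ^{1×r}A → 0 is exact, where the left map is induced by v ↦ vA and the right map is induced by the identity v ↦ v: that is, the left map is a well-defined injective group homomorphism, the right map is a well-defined surjective group homomorphism, and the range of the left map equals the kernel of the right map. -/
open Matrix

noncomputable def castLM (k : ℕ) : (Fin k → ℤ) →ₗ[ℤ] (Fin k → ℚ) where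
  toFun v i := (v i : ℚ)
  map_add' x y := by funext i; simp
  map_smul' z x := by funext i; simp [zsmul_eq_mul]

lemma castLM_inj (k : ℕ) : Function.Injective (castLM k) := by
  intro x y h
  funext i
  have := congrFun h i
  simpa [castLM] using this

lemma cast_mulVec {a b : ℕ} (M : Matrix (Fin a) (Fin b) ℤ) (x : Fin b → ℤ) :
    castLM a (M.mulVec x) = (M.map (Int.cast : ℤ → ℚ)).mulVec (castLM b x) := by
  funext j
  simp [castLM, Matrix.mulVec, dotProduct]

lemma vecMulLinear_inj {r n : ℕ} (A : Matrix (Fin r) (Fin n) ℤ) (hA : A.rank = r) :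
    Function.Injective A.vecMulLinear := by
  classical
  set A' : Matrix (Fin r) (Fin n) ℚ := A.map (Int.cast) with hA'def
  set S : Submodule ℤ (Fin r → ℤ) := LinearMap.range A.mulVecLin with hS
  have hfr : Module.finrank ℤ S = r := hA
  have b0 := Module.finBasis ℤ S
  let b : Module.Basis (Fin r) ℤ S := b0.reindex (finCongr hfr)
  have hli : LinearIndependent ℤ (fun i => castLM r ((b i : Fin r → ℤ))) := by
    have h1 : LinearIndependent ℤ (fun i => ((b i : Fin r → ℤ))) :=
      b.linearIndependent.map' S.subtype (Submodule.ker_subtype S)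
    exact h1.map' (castLM r) (LinearMap.ker_eq_bot.mpr (castLM_inj r))
  have hliQ : LinearIndependent ℚ (fun i => castLM r ((b i : Fin r → ℤ))) :=
    (LinearIndependent.iff_fractionRing ℤ ℚ).mp hli
  have hmem : ∀ i, castLM r ((b i : Fin r → ℤ)) ∈ LinearMap.range A'.mulVecLin := by
    intro i
    obtain ⟨x, hx⟩ := (b i).2
    exact ⟨castLM n x, by rw [mulVecLin_apply, ← cast_mulVec, ← mulVecLin_apply, hx]⟩
  have hrank' : A'.rank = r := by
    refine le_antisymm (le_of_le_of_eq A'.rank_le_card_height (Fintype.card_fin r)) ?_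
    have hspan : Submodule.span ℚ (Set.range fun i => castLM r ((b i : Fin r → ℤ)))
        ≤ LinearMap.range A'.mulVecLin := by
      rw [Submodule.span_le]
      rintro _ ⟨i, rfl⟩
      exact hmem i
    calc r = Module.finrank ℚ (Submodule.span ℚ
          (Set.range fun i => castLM r ((b i : Fin r → ℤ)))) := by
          rw [finrank_span_eq_card hliQ, Fintype.card_fin]
      _ ≤ A'.rank := Submodule.finrank_mono hspan
  -- transpose rank
  have hT : (A'ᵀ).rank = r := by rw [rank_transpose]; exact hrank'
  have hker : LinearMap.ker (A'ᵀ).mulVecLin = ⊥ := by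
    have hrn := LinearMap.finrank_range_add_finrank_ker (A'ᵀ).mulVecLin
    rw [Module.finrank_pi, Fintype.card_fin] at hrn
    have : Module.finrank ℚ (LinearMap.ker (A'ᵀ).mulVecLin) = 0 := by
      have := hT
      rw [Matrix.rank] at this
      omega
    exact Submodule.finrank_eq_zero.mp this
  have hinjT : Function.Injective (A'ᵀ).mulVecLin := LinearMap.ker_eq_bot.mp hker
  intro v w h
  apply castLM_inj r
  apply hinjT
  have h' : Matrix.vecMul v A = Matrix.vecMul w A := h
  have e : ∀ u : Fin r → ℤ, (A'ᵀ).mulVecLin (castLM r u) = castLM n (Matrix.vecMul u A) := by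
    intro u
    rw [mulVecLin_apply]
    have : A'ᵀ = (Aᵀ).map (Int.cast : ℤ → ℚ) := rfl
    rw [this, ← cast_mulVec, Matrix.mulVec_transpose]
  rw [e v, e w, h']

theorem stmt6 {r n : ℕ} (A : Matrix (Fin r) (Fin n) ℤ) (hA : A.rank = r)
    (B : Matrix (Fin n) (Fin r) ℤ) :
    ∃ (φ : ((Fin r → ℤ) ⧸ rowSpace B) →ₗ[ℤ] ((Fin n → ℤ) ⧸ rowSpace (B * A)))
      (ψ : ((Fin n → ℤ) ⧸ rowSpace (B * A)) →ₗ[ℤ] ((Fin n → ℤ) ⧸ rowSpace A)),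
      (∀ v : Fin r → ℤ,
          φ (Submodule.Quotient.mk v) = Submodule.Quotient.mk (Matrix.vecMul v A)) ∧
      (∀ v : Fin n → ℤ, ψ (Submodule.Quotient.mk v) = Submodule.Quotient.mk v) ∧
      Function.Injective φ ∧ Function.Surjective ψ ∧
      LinearMap.range φ = LinearMap.ker ψ := by
  classical
  have hle : rowSpace (B * A) ≤ rowSpace A := by
    rintro _ ⟨w, rfl⟩
    exact ⟨Matrix.vecMul w B, by simp [Matrix.vecMulLinear_apply, Matrix.vecMul_vecMul]⟩
  have hφ0 : rowSpace B ≤ LinearMap.ker ((rowSpace (B * A)).mkQ ∘ₗ A.vecMulLinear) := by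
    rintro _ ⟨w, rfl⟩
    simp only [LinearMap.mem_ker, LinearMap.comp_apply, Submodule.mkQ_apply,
      Submodule.Quotient.mk_eq_zero, Matrix.vecMulLinear_apply]
    exact ⟨w, by simp [Matrix.vecMulLinear_apply, Matrix.vecMul_vecMul]⟩
  refine ⟨(rowSpace B).liftQ ((rowSpace (B * A)).mkQ ∘ₗ A.vecMulLinear) hφ0,
    Submodule.mapQ _ _ LinearMap.id hle, ?_, ?_, ?_, ?_, ?_⟩
  · intro v; rfl
  · intro v; rfl
  · rw [← LinearMap.ker_eq_bot]
    rw [Submodule.ker_liftQ, Submodule.eq_bot_iff]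
    intro x hx
    obtain ⟨v, rfl⟩ := Submodule.Quotient.mk_surjective _ x
    simp only [Submodule.mem_map, Submodule.mkQ_apply] at hx
    obtain ⟨y, hy, hyx⟩ := hx
    have hinj := vecMulLinear_inj A hA
    simp only [LinearMap.mem_ker, LinearMap.comp_apply, Submodule.mkQ_apply,
      Submodule.Quotient.mk_eq_zero] at hy
    obtain ⟨w, hw⟩ := hy
    have hyB : y ∈ rowSpace B := by
      refine ⟨w, hinj ?_⟩
      show Matrix.vecMul (Matrix.vecMul w B) A = Matrix.vecMul y A
      rw [Matrix.vecMul_vecMul]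
      simpa [Matrix.vecMulLinear_apply] using hw
    have hvy : v - y ∈ rowSpace B := by
      rw [← Submodule.Quotient.eq]
      exact hyx.symm
    rw [Submodule.Quotient.mk_eq_zero]
    simpa using add_mem hvy hyB
  · intro y
    obtain ⟨v, rfl⟩ := Submodule.Quotient.mk_surjective _ y
    exact ⟨Submodule.Quotient.mk v, rfl⟩
  · apply le_antisymm
    · rintro _ ⟨x, rfl⟩
      obtain ⟨v, rfl⟩ := Submodule.Quotient.mk_surjective _ x
      simp only [LinearMap.mem_ker]
      show Submodule.Quotient.mk (Matrix.vecMul v A) = (0 : (Fin n → ℤ) ⧸ rowSpace A)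
      rw [Submodule.Quotient.mk_eq_zero]
      exact ⟨v, rfl⟩
    · intro x hx
      obtain ⟨v, rfl⟩ := Submodule.Quotient.mk_surjective _ x
      have : v ∈ rowSpace A := by
        rw [LinearMap.mem_ker] at hx
        have : (Submodule.Quotient.mk v : (Fin n → ℤ) ⧸ rowSpace A) = 0 := hx
        rwa [Submodule.Quotient.mk_eq_zero] at this
      obtain ⟨w, rfl⟩ := this
      exact ⟨Submodule.Quotient.mk w, rfl⟩
end

section
/- Let n ≥ 2 and d > 1 be integers, and let a = (a_1,…,a_{n-1}) ∈ ℤ^{n-1} satisfy 0 ≤ a_i < d for all i and gcd{d, a_1, …, a_{n-1}} = 1. Let B_a denote the n×n integer matrix with I_{n-1} in the upper left block, the column a in the upper right, zero row below the identity block, and d in the (n,n) entry. Let π be a permutation of {1,…,n} and let P be the n×n permutation matrix with P_{k,π(k)} = 1 and zeros elsewhere (so that column j of MP equals column π^{-1}(j) of M). Then there exist an integer matrix U with det U = ±1 and a' = (a'_1,…,a'_{n-1}) ∈ ℤ^{n-1} with 0 ≤ a'_i < d, gcd{d, a'_1, …, a'_{n-1}} = 1, and U·B_a = B_{a'}·P,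 if and only if either π(n) = n or gcd(a_{π(n)}, d) = 1. Moreover, when π(n) ≠ n and such U, a' exist, a' satisfies a'_{π^{-1}(n)}·a_{π(n)} ≡ 1 (mod d) and a'_t·a_{π(n)} ≡ −a_{π(t)} (mod d) for every t ∈ {1,…,n−1} with t ≠ π^{-1}(n). -/
/-- The block matrix `[[I_n, a], [0, d]]` of size `n+1`. -/
def Bcol {n : ℕ} (d : ℤ) (a : Fin n → ℤ) : Matrix (Fin (n + 1)) (Fin (n + 1)) ℤ :=
  Matrix.of fun i j =>
    if hj : j = Fin.last n then
      if hi : i = Fin.last n then d else a (i.castPred hi)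
    else
      if i = j then 1 else 0

/-- The permutation matrix `P` with `P (k, π k) = 1` and zeros elsewhere. -/
def permMat {n : ℕ} (π : Equiv.Perm (Fin n)) : Matrix (Fin n) (Fin n) ℤ :=
  Matrix.of fun i j => if π i = j then 1 else 0

namespace StmtAux
open Matrix Finset
variable {n : ℕ}

lemma Bcol_last_last (d : ℤ) (a : Fin n → ℤ) :
    Bcol d a (Fin.last n) (Fin.last n) = d := by simp [Bcol]

lemma Bcol_castSucc_last (d : ℤ) (a : Fin n → ℤ) (i : Fin n) :
    Bcol d a i.castSucc (Fin.last n) = a i := by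
  simp [Bcol, (Fin.castSucc_lt_last i).ne]

lemma Bcol_apply_castSucc (d : ℤ) (a : Fin n → ℤ) (i : Fin (n+1)) (j : Fin n) :
    Bcol d a i j.castSucc = if i = j.castSucc then 1 else 0 := by
  simp [Bcol, (Fin.castSucc_lt_last j).ne]

lemma Bcol_last_col (d : ℤ) (a : Fin n → ℤ) (i : Fin (n+1)) :
    Bcol d a i (Fin.last n) = if h : i = Fin.last n then d else a (i.castPred h) := by
  simp [Bcol]

lemma Bcol_ne_last (d : ℤ) (a : Fin n → ℤ) {j : Fin (n+1)} (i : Fin (n+1))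
    (hj : j ≠ Fin.last n) : Bcol d a i j = if i = j then 1 else 0 := by
  simp [Bcol, hj]

lemma castPred_congr {x y : Fin (n+1)} (h : x = y) (hx : x ≠ Fin.last n)
    (hy : y ≠ Fin.last n) : x.castPred hx = y.castPred hy := by subst h; rfl

lemma mul_permMat (M : Matrix (Fin (n+1)) (Fin (n+1)) ℤ) (π : Equiv.Perm (Fin (n+1)))
    (i j : Fin (n+1)) : (M * permMat π) i j = M i (π.symm j) := by
  rw [Matrix.mul_apply]
  simp [permMat, Equiv.apply_eq_iff_eq_symm_apply, mul_ite]

lemma permMat_mul (π : Equiv.Perm (Fin (n+1))) (M : Matrix (Fin (n+1)) (Fin (n+1)) ℤ)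
    (i j : Fin (n+1)) : (permMat π * M) i j = M (π i) j := by
  rw [Matrix.mul_apply]
  simp [permMat, ite_mul]

lemma det_Bcol (d : ℤ) (a : Fin n → ℤ) : (Bcol d a).det = d := by
  rw [Matrix.det_of_upperTriangular]
  · rw [Fin.prod_univ_castSucc]
    have : ∀ i : Fin n, Bcol d a i.castSucc i.castSucc = 1 := by
      intro i; rw [Bcol_apply_castSucc]; simp
    simp [this, Bcol_last_last]
  · intro i j hij
    have hj : j ≠ Fin.last n := by
      intro h; subst h; exact absurd (Fin.le_last i) (not_le.2 hij)
    rw [← Fin.castSucc_castPred j hj, Bcol_apply_castSucc]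
    rw [Fin.castSucc_castPred]
    have : i ≠ j := by rintro rfl; exact lt_irrefl _ hij
    simp [this]

lemma permMat_eq (π : Equiv.Perm (Fin (n+1))) : permMat π = π.permMatrix ℤ := by
  ext i j
  simp [permMat, Equiv.Perm.permMatrix, PEquiv.toMatrix_apply, Equiv.toPEquiv_apply]

lemma det_permMat (π : Equiv.Perm (Fin (n+1))) :
    (permMat π).det = 1 ∨ (permMat π).det = -1 := by
  rw [permMat_eq, Matrix.det_permutation]
  rcases Int.units_eq_one_or (Equiv.Perm.sign π) with h | h <;> simp [h]

variable {d : ℤ} {a a' : Fin n → ℤ} {π : Equiv.Perm (Fin (n+1))}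
variable {U : Matrix (Fin (n+1)) (Fin (n+1)) ℤ}

lemma det_U (hd : d ≠ 0) (h : U * Bcol d a = Bcol d a' * permMat π) :
    U.det = 1 ∨ U.det = -1 := by
  have h2 := congrArg Matrix.det h
  rw [Matrix.det_mul, Matrix.det_mul, det_Bcol, det_Bcol] at h2
  rcases det_permMat π with hp | hp
  · left
    rw [hp] at h2
    have h3 : U.det * d = 1 * d := by rw [h2]; ring
    exact mul_right_cancel₀ hd h3
  · right
    rw [hp] at h2
    have h3 : U.det * d = -1 * d := by rw [h2]; ring
    exact mul_right_cancel₀ hd h3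

lemma key_dvd (h : U * Bcol d a = Bcol d a' * permMat π) (i : Fin (n+1)) :
    d ∣ (Bcol d a' * permMat π) i (Fin.last n)
      - ∑ k : Fin n, (Bcol d a' * permMat π) i k.castSucc * a k := by
  have hcol : ∀ k : Fin n, (Bcol d a' * permMat π) i k.castSucc = U i k.castSucc := by
    intro k
    rw [← h, Matrix.mul_apply]
    simp [Bcol_apply_castSucc, mul_ite]
  have hlastcol : (Bcol d a' * permMat π) i (Fin.last n)
      = ∑ k : Fin n, U i k.castSucc * a k + U i (Fin.last n) * d := by
    rw [← h, Matrix.mul_apply, Fin.sum_univ_castSucc]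
    simp [Bcol_castSucc_last, Bcol_last_last]
  refine ⟨U i (Fin.last n), ?_⟩
  rw [hlastcol]
  simp only [hcol]
  ring

lemma sum_eval {m : Fin n} (hm : Fin.castSucc m = π (Fin.last n))
    (a a' : Fin n → ℤ) (i : Fin (n+1)) :
    ∑ k : Fin n, (Bcol d a' * permMat π) i k.castSucc * a k
      = Bcol d a' i (Fin.last n) * a m
        + ∑ k ∈ Finset.univ.erase m, (if π i = Fin.castSucc k then 1 else 0) * a k := by
  rw [← Finset.add_sum_erase _ _ (Finset.mem_univ m)]
  congr 1
  · rw [mul_permMat]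
    congr 2
    rw [hm, Equiv.symm_apply_apply]
  · refine Finset.sum_congr rfl ?_
    intro k hk
    have hkm : k ≠ m := Finset.ne_of_mem_erase hk
    have hne : π.symm k.castSucc ≠ Fin.last n := by
      intro hE
      apply hkm
      have h2 : k.castSucc = π (Fin.last n) := by rw [← hE, Equiv.apply_symm_apply]
      exact Fin.castSucc_injective n (h2.trans hm.symm)
    rw [mul_permMat, ← Fin.castSucc_castPred _ hne, Bcol_apply_castSucc,
      Fin.castSucc_castPred]
    congr 1
    simp only [Equiv.eq_symm_apply]

lemma key_val_last {m : Fin n} (hm : Fin.castSucc m = π (Fin.last n))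
    (hlast : π (Fin.last n) ≠ Fin.last n) (a a' : Fin n → ℤ) :
    (Bcol d a' * permMat π) (Fin.last n) (Fin.last n)
      - ∑ k : Fin n, (Bcol d a' * permMat π) (Fin.last n) k.castSucc * a k
      = -(d * a m) := by
  have hs : π.symm (Fin.last n) ≠ Fin.last n := by
    intro hE
    apply hlast
    have h2 := congrArg π hE
    rw [Equiv.apply_symm_apply] at h2
    exact h2.symm
  rw [sum_eval hm a a', mul_permMat, ← Fin.castSucc_castPred _ hs, Bcol_apply_castSucc,
    Bcol_last_last]
  have h0 : ∀ k ∈ Finset.univ.erase m,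
      (if π (Fin.last n) = Fin.castSucc k then 1 else 0) * a k = 0 := by
    intro k hk
    have : ¬ π (Fin.last n) = Fin.castSucc k := by
      rw [← hm]
      intro h
      exact Finset.ne_of_mem_erase hk (Fin.castSucc_injective n h.symm)
    simp [this]
  rw [Finset.sum_eq_zero h0]
  have hlf : ¬ Fin.last n = ((π.symm (Fin.last n)).castPred hs).castSucc := by
    rw [Fin.castSucc_castPred]
    intro h
    exact hs h.symm
  rw [if_neg hlf]
  ring

lemma key_val_fix {m : Fin n} (hm : Fin.castSucc m = π (Fin.last n))
    (a a' : Fin n → ℤ) (t : Fin n) (ht : t.castSucc = π.symm (Fin.last n)) :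
    (Bcol d a' * permMat π) t.castSucc (Fin.last n)
      - ∑ k : Fin n, (Bcol d a' * permMat π) t.castSucc k.castSucc * a k
      = 1 - a' t * a m := by
  have hπt : π t.castSucc = Fin.last n := by rw [ht, Equiv.apply_symm_apply]
  rw [sum_eval hm a a', mul_permMat, ← ht, Bcol_apply_castSucc, Bcol_castSucc_last]
  have h0 : ∀ k ∈ Finset.univ.erase m,
      (if π t.castSucc = Fin.castSucc k then 1 else 0) * a k = 0 := by
    intro k _
    have : ¬ π t.castSucc = Fin.castSucc k := by
      rw [hπt]; exact fun h => (Fin.castSucc_lt_last k).ne' h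
    simp [this]
  rw [Finset.sum_eq_zero h0]
  simp

lemma key_val_off {m : Fin n} (hm : Fin.castSucc m = π (Fin.last n))
    (a a' : Fin n → ℤ) (t : Fin n) (ht : t.castSucc ≠ π.symm (Fin.last n)) :
    (Bcol d a' * permMat π) t.castSucc (Fin.last n)
      - ∑ k : Fin n, (Bcol d a' * permMat π) t.castSucc k.castSucc * a k
      = -(a' t * a m + (Fin.snoc a d : Fin (n+1) → ℤ) (π t.castSucc)) := by
  have hπt : π t.castSucc ≠ Fin.last n := by
    intro h
    exact ht (by rw [← h, Equiv.symm_apply_apply])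
  set r : Fin n := (π t.castSucc).castPred hπt with hr
  have hrc : r.castSucc = π t.castSucc := Fin.castSucc_castPred _ hπt
  have hrm : r ≠ m := by
    intro h
    have h3 : π t.castSucc = π (Fin.last n) := by rw [← hrc, h, hm]
    exact (Fin.castSucc_lt_last t).ne (π.injective h3)
  have hsnoc : (Fin.snoc a d : Fin (n+1) → ℤ) (π t.castSucc) = a r := by
    rw [← hrc, Fin.snoc_castSucc]
  have hs : π.symm (Fin.last n) ≠ Fin.last n := by
    intro hE
    have h2 := congrArg π hE
    rw [Equiv.apply_symm_apply] at h2
    exact (Fin.castSucc_lt_last m).ne (hm.trans h2.symm)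
  have h1 : (Bcol d a' * permMat π) t.castSucc (Fin.last n) = 0 := by
    rw [mul_permMat, ← Fin.castSucc_castPred _ hs, Bcol_apply_castSucc,
      Fin.castSucc_castPred]
    simp [ht]
  rw [h1, sum_eval hm a a', Bcol_castSucc_last]
  have h2 : ∑ k ∈ Finset.univ.erase m, (if π t.castSucc = Fin.castSucc k then 1 else 0) * a k
      = a r := by
    have heq : ∀ k ∈ Finset.univ.erase m,
        (if π t.castSucc = Fin.castSucc k then 1 else 0) * a k
          = if r = k then a k else 0 := by
      intro k _
      rw [← hrc]
      by_cases h : r = k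
      · simp [h]
      · simp [h, fun hh => h (Fin.castSucc_injective n hh)]
    rw [Finset.sum_congr rfl heq, Finset.sum_ite_eq]
    simp [Finset.mem_erase, hrm]
  rw [h2, hsnoc]
  ring

lemma cong_of_eq (hlast : π (Fin.last n) ≠ Fin.last n)
    (h : U * Bcol d a = Bcol d a' * permMat π) :
    (∀ t : Fin n, t.castSucc = π.symm (Fin.last n) →
        Int.ModEq d (a' t * (Fin.snoc a d : Fin (n + 1) → ℤ) (π (Fin.last n))) 1) ∧
    (∀ t : Fin n, t.castSucc ≠ π.symm (Fin.last n) →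
        Int.ModEq d (a' t * (Fin.snoc a d : Fin (n + 1) → ℤ) (π (Fin.last n)))
          (-(Fin.snoc a d : Fin (n + 1) → ℤ) (π t.castSucc))) := by
  have hm : (((π (Fin.last n)).castPred hlast)).castSucc = π (Fin.last n) :=
    Fin.castSucc_castPred _ hlast
  set m : Fin n := (π (Fin.last n)).castPred hlast
  have hsnoc : (Fin.snoc a d : Fin (n+1) → ℤ) (π (Fin.last n)) = a m := by
    rw [← hm, Fin.snoc_castSucc]
  constructor
  · intro t ht
    have h1 := key_dvd h t.castSucc
    rw [key_val_fix hm a a' t ht] at h1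
    rw [hsnoc]
    exact Int.modEq_iff_dvd.mpr h1
  · intro t ht
    have h1 := key_dvd h t.castSucc
    rw [key_val_off hm a a' t ht] at h1
    rw [hsnoc, Int.modEq_iff_dvd]
    have h9 : -((Fin.snoc a d : Fin (n+1) → ℤ) (π t.castSucc)) - a' t * a m
        = -(a' t * a m + (Fin.snoc a d : Fin (n+1) → ℤ) (π t.castSucc)) := by ring
    rw [h9]
    exact h1

end StmtAux

open StmtAux in
theorem stmt9 {n : ℕ} (hn : 1 ≤ n) (d : ℤ) (hd : 1 < d)
    (a : Fin n → ℤ) (ha : ∀ i, 0 ≤ a i ∧ a i < d)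
    (hgcd : Int.gcd d (Finset.univ.gcd a) = 1)
    (π : Equiv.Perm (Fin (n + 1))) :
    ((∃ (U : Matrix (Fin (n + 1)) (Fin (n + 1)) ℤ) (a' : Fin n → ℤ),
        (U.det = 1 ∨ U.det = -1) ∧ (∀ i, 0 ≤ a' i ∧ a' i < d) ∧
        Int.gcd d (Finset.univ.gcd a') = 1 ∧
        U * Bcol d a = Bcol d a' * permMat π)
      ↔ (π (Fin.last n) = Fin.last n ∨
          Int.gcd ((Fin.snoc a d : Fin (n + 1) → ℤ) (π (Fin.last n))) d = 1))
    ∧ (∀ (U : Matrix (Fin (n + 1)) (Fin (n + 1)) ℤ) (a' : Fin n → ℤ),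
        π (Fin.last n) ≠ Fin.last n →
        (U.det = 1 ∨ U.det = -1) → (∀ i, 0 ≤ a' i ∧ a' i < d) →
        Int.gcd d (Finset.univ.gcd a') = 1 →
        U * Bcol d a = Bcol d a' * permMat π →
        (∀ t : Fin n, t.castSucc = π.symm (Fin.last n) →
            Int.ModEq d (a' t * (Fin.snoc a d : Fin (n + 1) → ℤ) (π (Fin.last n))) 1) ∧
        (∀ t : Fin n, t.castSucc ≠ π.symm (Fin.last n) →
            Int.ModEq d (a' t * (Fin.snoc a d : Fin (n + 1) → ℤ) (π (Fin.last n)))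
              (-(Fin.snoc a d : Fin (n + 1) → ℤ) (π t.castSucc)))) := by
  have hd0 : d ≠ 0 := by linarith
  have hcong_main : ∀ (U : Matrix (Fin (n + 1)) (Fin (n + 1)) ℤ) (a' : Fin n → ℤ),
      π (Fin.last n) ≠ Fin.last n →
      U * Bcol d a = Bcol d a' * permMat π →
      (∀ t : Fin n, t.castSucc = π.symm (Fin.last n) →
          Int.ModEq d (a' t * (Fin.snoc a d : Fin (n + 1) → ℤ) (π (Fin.last n))) 1) ∧
      (∀ t : Fin n, t.castSucc ≠ π.symm (Fin.last n) →
          Int.ModEq d (a' t * (Fin.snoc a d : Fin (n + 1) → ℤ) (π (Fin.last n)))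
            (-(Fin.snoc a d : Fin (n + 1) → ℤ) (π t.castSucc))) :=
    fun U a' hlast hUB => cong_of_eq hlast hUB
  constructor
  · constructor
    · -- existence implies the arithmetic condition
      rintro ⟨U, a', hdet, ha', hgcd', hUB⟩
      by_cases hlast : π (Fin.last n) = Fin.last n
      · exact Or.inl hlast
      · right
        have hm : ((π (Fin.last n)).castPred hlast).castSucc = π (Fin.last n) :=
          Fin.castSucc_castPred _ hlast
        set m : Fin n := (π (Fin.last n)).castPred hlast
        have hsnoc : (Fin.snoc a d : Fin (n+1) → ℤ) (π (Fin.last n)) = a m := by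
          rw [← hm, Fin.snoc_castSucc]
        have hs : π.symm (Fin.last n) ≠ Fin.last n := by
          intro hE
          apply hlast
          have h2 := congrArg π hE
          rw [Equiv.apply_symm_apply] at h2
          exact h2.symm
        have ht0 : ((π.symm (Fin.last n)).castPred hs).castSucc = π.symm (Fin.last n) :=
          Fin.castSucc_castPred _ hs
        set t0 : Fin n := (π.symm (Fin.last n)).castPred hs
        have hcong := (hcong_main U a' hlast hUB).1 t0 ht0
        rw [hsnoc] at hcong ⊢
        have hdvd : d ∣ 1 - a' t0 * a m := Int.modEq_iff_dvd.mp hcong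
        have h1 : (↑(Int.gcd (a m) d) : ℤ) ∣ 1 := by
          have hga : (↑(Int.gcd (a m) d) : ℤ) ∣ a m := Int.gcd_dvd_left _ _
          have hgd : (↑(Int.gcd (a m) d) : ℤ) ∣ d := Int.gcd_dvd_right _ _
          have h3 := dvd_add (hgd.trans hdvd) (hga.mul_left (a' t0))
          simpa using h3
        exact Nat.dvd_one.mp (by exact_mod_cast h1)
    · -- construction
      intro hyp
      by_cases hπ : π (Fin.last n) = Fin.last n
      · -- π fixes the last index: permute the a-entries
        have hcs : ∀ i : Fin n, π i.castSucc ≠ Fin.last n := by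
          intro i h
          exact (Fin.castSucc_lt_last i).ne (π.injective (h.trans hπ.symm))
        refine ⟨permMat π, fun i => a ((π i.castSucc).castPred (hcs i)),
          det_permMat π, fun i => ha _, ?_, ?_⟩
        · -- gcd condition
          have hdvd : Finset.univ.gcd (fun i => a ((π i.castSucc).castPred (hcs i)))
              ∣ Finset.univ.gcd a := by
            apply Finset.dvd_gcd
            intro j _
            have hsj : π.symm j.castSucc ≠ Fin.last n := by
              intro h
              have h2 := congrArg π h
              rw [Equiv.apply_symm_apply, hπ] at h2
              exact (Fin.castSucc_lt_last j).ne h2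
            have hic : ((π.symm j.castSucc).castPred hsj).castSucc = π.symm j.castSucc :=
              Fin.castSucc_castPred _ hsj
            have h5 : π ((π.symm j.castSucc).castPred hsj).castSucc = j.castSucc := by
              rw [hic, Equiv.apply_symm_apply]
            have h6 : a ((π ((π.symm j.castSucc).castPred hsj).castSucc).castPred
                (hcs _)) = a j := by
              apply congrArg a
              apply Fin.castSucc_injective n
              rw [Fin.castSucc_castPred, h5]
            calc Finset.univ.gcd (fun i => a ((π i.castSucc).castPred (hcs i)))
                ∣ a ((π ((π.symm j.castSucc).castPred hsj).castSucc).castPred (hcs _)) :=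
                  Finset.gcd_dvd (Finset.mem_univ _)
              _ = a j := h6
          rw [← Int.isCoprime_iff_gcd_eq_one] at hgcd ⊢
          exact IsCoprime.of_isCoprime_of_dvd_right hgcd hdvd
        · -- the matrix identity
          ext i j
          rw [permMat_mul, mul_permMat]
          by_cases hj : j = Fin.last n
          · subst hj
            have hsl : π.symm (Fin.last n) = Fin.last n := by
              rw [Equiv.symm_apply_eq, hπ]
            rw [hsl]
            by_cases hi : i = Fin.last n
            · subst hi; rw [hπ, Bcol_last_last, Bcol_last_last]
            · have hπi : π i ≠ Fin.last n := fun h => hi (π.injective (h.trans hπ.symm))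
              rw [Bcol_last_col, Bcol_last_col, dif_neg hπi, dif_neg hi]
              show a ((π i).castPred hπi)
                = a ((π (i.castPred hi).castSucc).castPred (hcs _))
              apply congrArg a
              apply castPred_congr
              rw [Fin.castSucc_castPred]
          · have hsj : π.symm j ≠ Fin.last n := by
              intro h
              have h2 := congrArg π h
              rw [Equiv.apply_symm_apply, hπ] at h2
              exact hj h2
            rw [Bcol_ne_last _ _ _ hj, Bcol_ne_last _ _ _ hsj]
            simp only [Equiv.eq_symm_apply]
      · -- the coprime case
        have hcop : Int.gcd ((Fin.snoc a d : Fin (n+1) → ℤ) (π (Fin.last n))) d = 1 :=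
          hyp.resolve_left hπ
        have hm : ((π (Fin.last n)).castPred hπ).castSucc = π (Fin.last n) :=
          Fin.castSucc_castPred _ hπ
        set m : Fin n := (π (Fin.last n)).castPred hπ
        have hsnoc : (Fin.snoc a d : Fin (n+1) → ℤ) (π (Fin.last n)) = a m := by
          rw [← hm, Fin.snoc_castSucc]
        rw [hsnoc] at hcop
        have hs : π.symm (Fin.last n) ≠ Fin.last n := by
          intro hE
          apply hπ
          have h2 := congrArg π hE
          rw [Equiv.apply_symm_apply] at h2
          exact h2.symm
        obtain ⟨u, v, huv⟩ := Int.isCoprime_iff_gcd_eq_one.mpr hcop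
        set a' : Fin n → ℤ := fun i =>
          (if i.castSucc = π.symm (Fin.last n) then u
           else -((Fin.snoc a d : Fin (n+1) → ℤ) (π i.castSucc)) * u) % d with ha'def
        have hdpos : (0:ℤ) < d := by linarith
        have hbound : ∀ i, 0 ≤ a' i ∧ a' i < d := fun i =>
          ⟨Int.emod_nonneg _ hd0, Int.emod_lt_of_pos _ hdpos⟩
        have hmod : ∀ x : ℤ, x % d ≡ x [ZMOD d] := fun x =>
          Int.emod_emod_of_dvd x dvd_rfl
        have humod : a m * u ≡ 1 [ZMOD d] := by
          rw [Int.modEq_iff_dvd]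
          exact ⟨v, by linear_combination -huv⟩
        have ht0c : ((π.symm (Fin.last n)).castPred hs).castSucc = π.symm (Fin.last n) :=
          Fin.castSucc_castPred _ hs
        set t0 : Fin n := (π.symm (Fin.last n)).castPred hs
        have ht0 : a' t0 = u % d := by
          simp only [ha'def]
          rw [if_pos ht0c]
        have hgcd' : Int.gcd d (Finset.univ.gcd a') = 1 := by
          have h1 : (↑(Int.gcd d (Finset.univ.gcd a')) : ℤ) ∣ 1 := by
            have hdd : (↑(Int.gcd d (Finset.univ.gcd a')) : ℤ) ∣ d := Int.gcd_dvd_left _ _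
            have hda : (↑(Int.gcd d (Finset.univ.gcd a')) : ℤ) ∣ a' t0 :=
              dvd_trans (Int.gcd_dvd_right _ _) (Finset.gcd_dvd (Finset.mem_univ t0))
            have hc : a m * a' t0 ≡ 1 [ZMOD d] := by
              rw [ht0]
              calc a m * (u % d) ≡ a m * u [ZMOD d] := (hmod u).mul_left _
                _ ≡ 1 [ZMOD d] := humod
            have hd1 : d ∣ 1 - a m * a' t0 := Int.modEq_iff_dvd.mp hc
            have h3 := dvd_add (hdd.trans hd1) (hda.mul_left (a m))
            simpa using h3
          exact Nat.dvd_one.mp (by exact_mod_cast h1)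
        have Hdvd : ∀ i : Fin (n+1), d ∣ (Bcol d a' * permMat π) i (Fin.last n)
            - ∑ k : Fin n, (Bcol d a' * permMat π) i k.castSucc * a k := by
          intro i
          rcases eq_or_ne i (Fin.last n) with rfl | hi
          · rw [key_val_last hm hπ a a']
            exact ⟨-(a m), by ring⟩
          · obtain ⟨t, rfl⟩ : ∃ t : Fin n, t.castSucc = i :=
              ⟨i.castPred hi, Fin.castSucc_castPred i hi⟩
            by_cases htc : t.castSucc = π.symm (Fin.last n)
            · rw [key_val_fix hm a a' t htc]
              have ht' : a' t = u % d := by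
                simp only [ha'def]
                rw [if_pos htc]
              have hc : a' t * a m ≡ 1 [ZMOD d] := by
                rw [ht']
                calc u % d * a m ≡ u * a m [ZMOD d] := (hmod u).mul_right _
                  _ ≡ 1 [ZMOD d] := by rwa [mul_comm] at humod
              exact Int.modEq_iff_dvd.mp hc
            · rw [key_val_off hm a a' t htc]
              have ht' : a' t
                  = -((Fin.snoc a d : Fin (n+1) → ℤ) (π t.castSucc)) * u % d := by
                simp only [ha'def]
                rw [if_neg htc]
              set w := (Fin.snoc a d : Fin (n+1) → ℤ) (π t.castSucc) with hw
              have hc : a' t * a m ≡ -w [ZMOD d] := by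
                rw [ht']
                calc -w * u % d * a m ≡ -w * u * a m [ZMOD d] := (hmod _).mul_right _
                  _ = -w * (a m * u) := by ring
                  _ ≡ -w * 1 [ZMOD d] := humod.mul_left _
                  _ = -w := by ring
              have h8 := Int.modEq_iff_dvd.mp hc
              have h9 : -(a' t * a m + w) = -w - a' t * a m := by ring
              rw [h9]
              exact h8
        set U : Matrix (Fin (n+1)) (Fin (n+1)) ℤ := Matrix.of fun i j =>
          if j = Fin.last n then
            ((Bcol d a' * permMat π) i (Fin.last n)
              - ∑ k : Fin n, (Bcol d a' * permMat π) i k.castSucc * a k) / d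
          else (Bcol d a' * permMat π) i j with hUdef
        have hUlast : ∀ i, U i (Fin.last n) * d = (Bcol d a' * permMat π) i (Fin.last n)
            - ∑ k : Fin n, (Bcol d a' * permMat π) i k.castSucc * a k := by
          intro i
          simp only [hUdef, Matrix.of_apply, if_pos rfl]
          exact Int.ediv_mul_cancel (Hdvd i)
        have hUcol : ∀ i (k : Fin n),
            U i k.castSucc = (Bcol d a' * permMat π) i k.castSucc := by
          intro i k
          simp only [hUdef, Matrix.of_apply, if_neg (Fin.castSucc_lt_last k).ne]
        have hU : U * Bcol d a = Bcol d a' * permMat π := by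
          ext i j
          rw [Matrix.mul_apply]
          rcases eq_or_ne j (Fin.last n) with rfl | hj
          · rw [Fin.sum_univ_castSucc]
            simp only [Bcol_castSucc_last, Bcol_last_last]
            rw [hUlast i]
            rw [Finset.sum_congr rfl (fun k _ => by rw [hUcol i k])]
            ring
          · obtain ⟨j', rfl⟩ : ∃ t : Fin n, t.castSucc = j :=
              ⟨j.castPred hj, Fin.castSucc_castPred j hj⟩
            have hrow : ∀ k, U i k * Bcol d a k j'.castSucc
                = if k = j'.castSucc then U i k else 0 := by
              intro k
              rw [Bcol_apply_castSucc]
              split <;> simp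
            rw [Finset.sum_congr rfl (fun k _ => hrow k), Finset.sum_ite_eq']
            simp [hUcol i j']
        exact ⟨U, a', det_U hd0 hU, hbound, hgcd', hU⟩
  · intro U a' hlast _ _ _ hUB
    exact hcong_main U a' hlast hUB
end

section
/- Let B ∈ 𝒩𝒮_n and 1 ≤ m ≤ n. Then B is PH-equivalent to a block matrix of the form [[I_m, X],[0, Z]] (with I_m the m×m identity, X an m×(n−m) integer matrix, Z an (n−m)×(n−m) integer matrix) if and only if there exists a subset Ω ⊆ {1,…,n} with |Ω| = m such that P_Ω(r(B)) = ℤ^{Ω}. -/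
/-- Permutation-Hermite equivalence: `U * B * P = B'` for some `U ∈ GL(n, ℤ)`
and permutation matrix `P`. -/
def PHEquiv {n : ℕ} (B B' : Matrix (Fin n) (Fin n) ℤ) : Prop :=
  ∃ (U : Matrix (Fin n) (Fin n) ℤ) (π : Equiv.Perm (Fin n)),
    (U.det = 1 ∨ U.det = -1) ∧ U * B * permMat π = B'


lemma mem_rowSpace {m n : ℕ} {A : Matrix (Fin m) (Fin n) ℤ} {x : Fin n → ℤ} :
    x ∈ rowSpace A ↔ ∃ v : Fin m → ℤ, Matrix.vecMul v A = x := by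
  simp [rowSpace, LinearMap.mem_range, Matrix.vecMulLinear_apply]

lemma vecMul_permMat {n : ℕ} (π : Equiv.Perm (Fin n)) (w : Fin n → ℤ) (j : Fin n) :
    (Matrix.vecMul w (permMat π)) j = w (π⁻¹ j) := by
  have h : ∀ i : Fin n, w i * (if π i = j then (1:ℤ) else 0)
      = if i = π⁻¹ j then w i else 0 := by
    intro i
    by_cases h : π i = j
    · have : i = π⁻¹ j := by simp [← h]
      simp [h, this]
    · have : ¬ (i = π⁻¹ j) := by
        intro hh; exact h (by simp [hh])
      rw [if_neg h, if_neg this, mul_zero]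
  simp only [Matrix.vecMul, dotProduct, permMat, Matrix.of_apply]
  rw [Finset.sum_congr rfl (fun i _ => h i), Finset.sum_ite_eq']
  simp

lemma permMat_eq {n : ℕ} (π : Equiv.Perm (Fin n)) :
    permMat π = π.permMatrix ℤ := by
  ext i j
  simp [permMat, Equiv.Perm.permMatrix, PEquiv.toMatrix_apply, Equiv.toPEquiv_apply,
    Option.mem_def]

lemma isUnit_det_permMat {n : ℕ} (π : Equiv.Perm (Fin n)) : IsUnit (permMat π).det := by
  rw [permMat_eq, Matrix.det_permutation]
  exact (Equiv.Perm.sign π).isUnit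

lemma vecMul_eq_sum {n p : ℕ} (A : Matrix (Fin n) (Fin p) ℤ) (v : Fin n → ℤ) :
    Matrix.vecMul v A = ∑ k, v k • A k := by
  funext j
  simp [Matrix.vecMul, dotProduct, Finset.sum_apply]

lemma mul_apply_eq_vecMul {n p : ℕ} (U : Matrix (Fin n) (Fin n) ℤ)
    (A : Matrix (Fin n) (Fin p) ℤ) (i : Fin n) :
    (U * A) i = Matrix.vecMul (U i) A := by
  funext j
  simp [Matrix.mul_apply, Matrix.vecMul, dotProduct]

set_option maxHeartbeats 1000000 in
set_option synthInstance.maxHeartbeats 1000000 in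

lemma det_ne_zero_of_rank {n : ℕ} (B : Matrix (Fin n) (Fin n) ℤ) (h : B.rank = n) :
    B.det ≠ 0 := by
  have hinj : Function.Injective B.mulVecLin := by
    have hfr : Module.finrank ℤ ↥(LinearMap.range B.mulVecLin) = n := h
    let e : ↥(LinearMap.range B.mulVecLin) ≃ₗ[ℤ] (Fin n → ℤ) :=
      ((Module.finBasis ℤ ↥(LinearMap.range B.mulVecLin)).reindex (finCongr hfr)).equivFun
    have hsurj : Function.Surjective
        (e.toLinearMap ∘ₗ B.mulVecLin.rangeRestrict) :=
      e.surjective.comp B.mulVecLin.surjective_rangeRestrict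
    have hinj' := OrzechProperty.injective_of_surjective_endomorphism _ hsurj
    intro x y hxy
    apply hinj'
    simp only [LinearMap.comp_apply]
    congr 1
    exact Subtype.ext (by simpa using hxy)
  intro hdet
  obtain ⟨v, hv0, hv⟩ := Matrix.exists_mulVec_eq_zero_iff.mpr hdet
  apply hv0
  apply hinj
  simpa [Matrix.mulVecLin_apply] using hv

lemma finrank_rowSpace {n : ℕ} (B : Matrix (Fin n) (Fin n) ℤ) (h : B.det ≠ 0) :
    Module.finrank ℤ ↥(rowSpace B) = n := by
  have hinj : Function.Injective B.vecMulLinear := by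
    rw [← LinearMap.ker_eq_bot]
    rw [Submodule.eq_bot_iff]
    intro x hx
    by_contra hx0
    exact h (Matrix.exists_vecMul_eq_zero_iff.mp
      ⟨x, hx0, by simpa [Matrix.vecMulLinear_apply] using hx⟩)
  have := (LinearEquiv.ofInjective B.vecMulLinear hinj).finrank_eq
  rw [rowSpace, ← this]
  simp [Module.finrank_pi]


lemma single_vecMul' {n p : ℕ} (A : Matrix (Fin n) (Fin p) ℤ) (k : Fin n) :
    Matrix.vecMul (Pi.single k 1) A = A k := by
  funext j
  simp only [Matrix.vecMul, dotProduct, Pi.single_apply]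
  rw [Finset.sum_congr rfl (fun i _ => by rw [ite_mul, one_mul, zero_mul]),
    Finset.sum_ite_eq']
  simp

set_option maxHeartbeats 1600000 in
lemma exists_C {n m : ℕ} (hmn : m ≤ n) (B' : Matrix (Fin n) (Fin n) ℤ)
    (hrank : Module.finrank ℤ ↥(rowSpace B') = n)
    (hsurj : Submodule.map (LinearMap.funLeft ℤ ℤ (Fin.castLE hmn)) (rowSpace B') = ⊤) :
    ∃ U : Matrix (Fin n) (Fin n) ℤ, (U.det = 1 ∨ U.det = -1) ∧
      (∀ i j : Fin n, (i : ℕ) < m → (j : ℕ) < m →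
        (U * B') i j = if i = j then 1 else 0) ∧
      (∀ i j : Fin n, m ≤ (i : ℕ) → (j : ℕ) < m → (U * B') i j = 0) := by
  classical
  set L := rowSpace B' with hL
  set q : (Fin n → ℤ) →ₗ[ℤ] (Fin m → ℤ) := LinearMap.funLeft ℤ ℤ (Fin.castLE hmn) with hq
  set f : ↥L →ₗ[ℤ] (Fin m → ℤ) := q ∘ₗ L.subtype with hf
  have hfs : Function.Surjective f := by
    rw [← LinearMap.range_eq_top, hf, LinearMap.range_comp, Submodule.range_subtype]
    exact hsurj
  obtain ⟨g, hg⟩ := Module.projective_lifting_property f LinearMap.id hfs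
  have hfg : ∀ t, f (g t) = t := fun t => by
    have := LinearMap.ext_iff.mp hg t
    simpa using this
  have ginj : Function.Injective g := Function.LeftInverse.injective hfg
  set F : ↥L →ₗ[ℤ] ↥(LinearMap.range g) := g.rangeRestrict ∘ₗ f with hF
  have hFproj : ∀ x : ↥(LinearMap.range g), F (x : ↥L) = x := by
    rintro ⟨x, t, rfl⟩
    apply Subtype.ext
    simp [hF, hfg]
  have hcompl : IsCompl (LinearMap.range g) (LinearMap.ker F) :=
    LinearMap.isCompl_of_proj hFproj
  haveI : IsNoetherian ℤ ↥L := inferInstance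
  haveI : Module.Finite ℤ ↥L := Module.Finite.iff_fg.mpr (IsNoetherian.noetherian L)
  haveI : Module.Free ℤ ↥L := Module.free_of_finite_type_torsion_free'
  haveI hfin1 : Module.Finite ℤ ↥(LinearMap.range g) :=
    Module.Finite.iff_fg.mpr (IsNoetherian.noetherian _)
  haveI hfin2 : Module.Finite ℤ ↥(LinearMap.ker F) :=
    Module.Finite.iff_fg.mpr (IsNoetherian.noetherian _)
  haveI hfree1 : Module.Free ℤ ↥(LinearMap.range g) := Module.free_of_finite_type_torsion_free'
  haveI hfree2 : Module.Free ℤ ↥(LinearMap.ker F) := Module.free_of_finite_type_torsion_free'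
  set eqv := Submodule.prodEquivOfIsCompl _ _ hcompl with heqv
  set bg : Module.Basis (Fin m) ℤ ↥(LinearMap.range g) :=
    (Pi.basisFun ℤ (Fin m)).map (LinearEquiv.ofInjective g ginj) with hbg
  have hrg : Module.finrank ℤ ↥(LinearMap.range g) = m := by
    rw [← (LinearEquiv.ofInjective g ginj).finrank_eq]
    simp [Module.finrank_pi]
  have hkr : Module.finrank ℤ ↥(LinearMap.ker F) = n - m := by
    have h1 : Module.finrank ℤ (↥(LinearMap.range g) × ↥(LinearMap.ker F)) = n :=
      eqv.finrank_eq.trans hrank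
    rw [Module.finrank_prod, hrg] at h1
    omega
  set bk : Module.Basis (Fin (n - m)) ℤ ↥(LinearMap.ker F) :=
    (Module.finBasis ℤ _).reindex (finCongr hkr) with hbk
  set e : (Fin m ⊕ Fin (n - m)) ≃ Fin n :=
    finSumFinEquiv.trans (finCongr (by omega)) with he
  set c : Module.Basis (Fin n) ℤ ↥L := ((bg.prod bk).map eqv).reindex e with hc
  -- evaluation of the basis
  have hcl : ∀ j : Fin m, c (e (Sum.inl j)) = g (Pi.single j 1) := by
    intro j
    rw [hc, Module.Basis.reindex_apply, Equiv.symm_apply_apply, Module.Basis.map_apply]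
    have : (bg.prod bk) (Sum.inl j) = (bg j, 0) := by
      ext
      · simp [Module.Basis.prod_apply_inl_fst]
      · simp [Module.Basis.prod_apply_inl_snd]
    rw [this]
    rw [heqv]
    rw [Submodule.coe_prodEquivOfIsCompl']
    simp [hbg, Pi.basisFun_apply]
  have hck : ∀ j : Fin (n - m), f (c (e (Sum.inr j))) = 0 := by
    intro j
    rw [hc, Module.Basis.reindex_apply, Equiv.symm_apply_apply, Module.Basis.map_apply]
    have h2 : (bg.prod bk) (Sum.inr j) = (0, bk j) := by
      ext
      · simp [Module.Basis.prod_apply_inr_fst]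
      · simp [Module.Basis.prod_apply_inr_snd]
    rw [h2, heqv, Submodule.coe_prodEquivOfIsCompl']
    have hker : (bk j : ↥L) ∈ LinearMap.ker F := (bk j).2
    rw [LinearMap.mem_ker] at hker
    simp only [hF, LinearMap.comp_apply] at hker
    have hgf : g (f ((bk j : ↥L))) = 0 := by
      have := congrArg (Subtype.val) hker
      simpa using this
    have hf0 : f ((bk j : ↥L)) = 0 := by
      apply ginj
      simpa using hgf
    simpa using hf0
  -- build U from the rows expressing the basis `c`
  have hmem : ∀ i : Fin n, ∃ v : Fin n → ℤ, Matrix.vecMul v B' = ((c i : ↥L) : Fin n → ℤ) :=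
    fun i => mem_rowSpace.mp (c i).2
  choose Uv hUv using hmem
  set U : Matrix (Fin n) (Fin n) ℤ := Matrix.of Uv with hUdef
  have hUB : ∀ i, (U * B') i = ((c i : ↥L) : Fin n → ℤ) := by
    intro i; rw [mul_apply_eq_vecMul]; exact hUv i
  have hrow : ∀ k : Fin n, B' k ∈ L :=
    fun k => mem_rowSpace.mpr ⟨Pi.single k 1, single_vecMul' B' k⟩
  set V : Matrix (Fin n) (Fin n) ℤ :=
    Matrix.of (fun k l => c.repr ⟨B' k, hrow k⟩ l) with hV
  have hUV : U * V = 1 := by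
    ext i l
    have hsum : (∑ k, U i k • (⟨B' k, hrow k⟩ : ↥L)) = c i := by
      apply Subtype.ext
      have h3 : ((∑ k, U i k • (⟨B' k, hrow k⟩ : ↥L) : ↥L) : Fin n → ℤ)
          = ∑ k, U i k • B' k := by
        simp
      rw [h3, ← vecMul_eq_sum]
      exact hUv i
    have h4 : (U * V) i l = ∑ k, U i k * (c.repr ⟨B' k, hrow k⟩) l := by
      simp [Matrix.mul_apply, hV]
    have h5 : (c.repr (∑ k, U i k • (⟨B' k, hrow k⟩ : ↥L))) l
        = ∑ k, U i k * (c.repr ⟨B' k, hrow k⟩) l := by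
      rw [map_sum, Finsupp.coe_finset_sum, Finset.sum_apply]
      refine Finset.sum_congr rfl fun k _ => ?_
      rw [map_smul, Finsupp.smul_apply, smul_eq_mul]
    rw [h4, ← h5, hsum, c.repr_self]
    simp [Matrix.one_apply, Finsupp.single_apply]
  have hdetU : IsUnit U.det := Matrix.isUnit_det_of_right_inverse hUV
  refine ⟨U, Int.isUnit_iff.mp hdetU, ?_, ?_⟩
  · intro i j hi hj
    have hie : e (Sum.inl ⟨i, hi⟩) = i := by
      apply Fin.ext; simp [he]
    have hci := hcl ⟨i, hi⟩
    rw [hie] at hci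
    have hfval : f (g (Pi.single (⟨i, hi⟩ : Fin m) (1:ℤ))) = Pi.single (⟨i, hi⟩ : Fin m) (1:ℤ) := hfg _
    have hcast : Fin.castLE hmn (⟨j, hj⟩ : Fin m) = j := Fin.ext (by simp)
    have key : (U * B') i (Fin.castLE hmn (⟨j, hj⟩ : Fin m))
        = (Pi.single (⟨i, hi⟩ : Fin m) (1:ℤ) : Fin m → ℤ) (⟨j, hj⟩ : Fin m) := by
      rw [show (U * B') i = ((c i : ↥L) : Fin n → ℤ) from hUB i, hci]
      have := congrFun hfval ⟨j, hj⟩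
      simpa [hf, hq, LinearMap.funLeft_apply] using this
    rw [hcast] at key
    rw [key, Pi.single_apply]
    by_cases hij : i = j
    · subst hij; simp
    · have hne : ¬((⟨j, hj⟩ : Fin m) = (⟨i, hi⟩ : Fin m)) :=
        fun hh => hij (Fin.ext ((congrArg Fin.val hh).symm))
      simp [hij, hne]
  · intro i j hi hj
    have hie : e (Sum.inr ⟨(i : ℕ) - m, by have := i.isLt; omega⟩) = i := by
      apply Fin.ext; simp [he]; omega
    have hci := hck ⟨(i : ℕ) - m, by have := i.isLt; omega⟩
    rw [hie] at hci
    have hcast : Fin.castLE hmn (⟨j, hj⟩ : Fin m) = j := Fin.ext (by simp)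
    have key : (U * B') i (Fin.castLE hmn (⟨j, hj⟩ : Fin m)) = 0 := by
      rw [show (U * B') i = ((c i : ↥L) : Fin n → ℤ) from hUB i]
      have := congrFun hci ⟨j, hj⟩
      simpa [hf, hq, LinearMap.funLeft_apply] using this
    rwa [hcast] at key


theorem stmt11 {n : ℕ} (B : Matrix (Fin n) (Fin n) ℤ) (hB : WeaklyNonsingular B)
    (m : ℕ) (hm1 : 1 ≤ m) (hmn : m ≤ n) :
    (∃ C : Matrix (Fin n) (Fin n) ℤ, PHEquiv B C ∧
        (∀ i j : Fin n, (i : ℕ) < m → (j : ℕ) < m → C i j = if i = j then 1 else 0) ∧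
        (∀ i j : Fin n, m ≤ (i : ℕ) → (j : ℕ) < m → C i j = 0))
      ↔ (∃ Ω : Finset (Fin n), Ω.card = m ∧
          Submodule.map
            (LinearMap.funLeft ℤ ℤ (Subtype.val : {x // x ∈ Ω} → Fin n))
            (rowSpace B) = ⊤) := by
  classical
  constructor
  · rintro ⟨C, ⟨U, π, hdet, hUBP⟩, hId, -⟩
    set Ω : Finset (Fin n) :=
      Finset.image (fun j : Fin m => π⁻¹ (Fin.castLE hmn j)) Finset.univ with hΩ
    have hmemΩ : ∀ i : Fin n, i ∈ Ω ↔ (π i : ℕ) < m := by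
      intro i
      constructor
      · intro hi
        rw [hΩ, Finset.mem_image] at hi
        obtain ⟨j, -, rfl⟩ := hi
        simpa using j.isLt
      · intro hi
        rw [hΩ, Finset.mem_image]
        refine ⟨⟨π i, hi⟩, Finset.mem_univ _, ?_⟩
        have : Fin.castLE hmn (⟨π i, hi⟩ : Fin m) = π i := Fin.ext (by simp)
        rw [this]
        simp
    have hcard : Ω.card = m := by
      rw [hΩ, Finset.card_image_of_injective _ ?_, Finset.card_univ, Fintype.card_fin]
      intro a b hab
      have := congrArg π hab
      simp only [Equiv.Perm.inv_def, Equiv.apply_symm_apply] at this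
      exact Fin.ext (by simpa [Fin.ext_iff] using this)
    refine ⟨Ω, hcard, ?_⟩
    rw [eq_top_iff]
    rintro u -
    set v : Fin n → ℤ := fun k =>
      if h : (k : ℕ) < m then u ⟨π⁻¹ k, (hmemΩ _).mpr (by simpa using h)⟩ else 0 with hv
    set w := Matrix.vecMul (Matrix.vecMul v U) B with hw
    refine Submodule.mem_map.mpr ⟨w, mem_rowSpace.mpr ⟨_, rfl⟩, ?_⟩
    funext ω
    simp only [LinearMap.funLeft_apply]
    rcases ω with ⟨i, hiΩ⟩
    have hπi : (π i : ℕ) < m := (hmemΩ i).mp hiΩ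
    have h1 : w i = Matrix.vecMul w (permMat π) (π i) := by
      rw [vecMul_permMat]; simp
    have h2 : Matrix.vecMul w (permMat π) = Matrix.vecMul v C := by
      rw [hw, Matrix.vecMul_vecMul, Matrix.vecMul_vecMul, ← Matrix.mul_assoc, hUBP]
    have hterm : ∀ k : Fin n, v k * C k (π i) = if k = π i then v k else 0 := by
      intro k
      by_cases hk : (k : ℕ) < m
      · rw [hId k (π i) hk hπi]
        by_cases hkk : k = π i <;> simp [hkk]
      · have hv0 : v k = 0 := by rw [hv]; simp [hk]
        rw [hv0]
        simp
    have h3 : Matrix.vecMul v C (π i) = v (π i) := by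
      have : Matrix.vecMul v C (π i) = ∑ k, v k * C k (π i) := by
        simp [Matrix.vecMul, dotProduct]
      rw [this, Finset.sum_congr rfl (fun k _ => hterm k), Finset.sum_ite_eq']
      simp
    have h4 : v (π i) = u ⟨i, hiΩ⟩ := by
      rw [hv]
      dsimp only
      rw [dif_pos hπi]
      congr 1
      exact Subtype.ext (by simp)
    rw [h1, h2, h3, h4]
  · rintro ⟨Ω, hcard, hmap⟩
    have hcc : Fintype.card {x // x ∉ Ω} = n - m := by
      rw [Fintype.card_subtype_compl]
      simp [hcard]
    set e₁ : {x // x ∈ Ω} ≃ Fin m :=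
      Fintype.equivFinOfCardEq (by simpa using hcard) with he₁
    set e₂ : {x // x ∉ Ω} ≃ Fin (n - m) := Fintype.equivFinOfCardEq hcc with he₂
    set π : Equiv.Perm (Fin n) :=
      (Equiv.sumCompl (· ∈ Ω)).symm.trans
        ((e₁.sumCongr e₂).trans (finSumFinEquiv.trans (finCongr (by omega)))) with hπdef
    have hπ : ∀ i : Fin n, i ∈ Ω ↔ (π i : ℕ) < m := by
      intro i
      by_cases hi : i ∈ Ω
      · simp only [hπdef, Equiv.trans_apply]
        rw [Equiv.sumCompl_symm_apply_of_pos hi]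
        simpa [hi] using (e₁ ⟨i, hi⟩).isLt
      · simp only [hπdef, Equiv.trans_apply]
        rw [Equiv.sumCompl_symm_apply_of_neg hi]
        simp [hi]
    set B' := B * permMat π with hB'
    have hdetB' : B'.det ≠ 0 := by
      rw [hB', Matrix.det_mul]
      exact mul_ne_zero (det_ne_zero_of_rank B hB.1) (isUnit_det_permMat π).ne_zero
    have hsurj : Submodule.map (LinearMap.funLeft ℤ ℤ (Fin.castLE hmn)) (rowSpace B') = ⊤ := by
      rw [eq_top_iff]
      rintro t -
      set u : {x // x ∈ Ω} → ℤ := fun ω => t ⟨π ω.1, (hπ _).mp ω.2⟩ with hu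
      obtain ⟨w₀, hw₀, hw₀u⟩ : ∃ w₀ ∈ rowSpace B,
          (LinearMap.funLeft ℤ ℤ (Subtype.val : {x // x ∈ Ω} → Fin n)) w₀ = u := by
        have : u ∈ Submodule.map
            (LinearMap.funLeft ℤ ℤ (Subtype.val : {x // x ∈ Ω} → Fin n)) (rowSpace B) := by
          rw [hmap]; trivial
        simpa [Submodule.mem_map] using this
      refine Submodule.mem_map.mpr ⟨Matrix.vecMul w₀ (permMat π), ?_, ?_⟩
      · obtain ⟨v, hv⟩ := mem_rowSpace.mp hw₀
        refine mem_rowSpace.mpr ⟨v, ?_⟩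
        rw [hB', ← Matrix.vecMul_vecMul, hv]
      · funext j
        simp only [LinearMap.funLeft_apply]
        rw [vecMul_permMat]
        have hmem : (π⁻¹ (Fin.castLE hmn j)) ∈ Ω := by
          apply (hπ _).mpr
          simpa using j.isLt
        have := congrFun hw₀u ⟨π⁻¹ (Fin.castLE hmn j), hmem⟩
        simp only [LinearMap.funLeft_apply] at this
        rw [this, hu]
        dsimp only
        congr 1
        apply Fin.ext
        simp
    obtain ⟨U, hUdet, h1, h2⟩ := exists_C hmn B' (finrank_rowSpace B' hdetB') hsurj
    exact ⟨U * B', ⟨U, π, hUdet, by rw [hB', Matrix.mul_assoc]⟩, h1, h2⟩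
end

section
/- Let B ∈ 𝒩𝒮_n and let C ∈ 𝒩𝒮_n satisfy CᵀB = diag(m(1),…,m(n)) with all m(i) > 0. Then for each i ∈ {1,…,n}, the class E_i + r(B) has additive order exactly m(i) in J(B) = ℤ^{1×n}/r(B), and likewise E_i + r(C) has additive order exactly m(i) in J(C) = ℤ^{1×n}/r(C). -/
open Matrix

lemma keyrow {n : ℕ} (B C : Matrix (Fin n) (Fin n) ℤ) (m : Fin n → ℤ)
    (h : Cᵀ * B = Matrix.diagonal m) (i : Fin n) :
    B.vecMulLinear (fun j => C j i) = m i • Pi.single i 1 := by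
  funext j
  have := congrFun (congrFun h i) j
  simp [Matrix.mul_apply, Matrix.diagonal, vecMulLinear_apply, vecMul, dotProduct] at this ⊢
  rw [this]
  by_cases hij : j = i
  · simp [hij, Pi.single_apply]
  · simp [hij, Pi.single_apply]
    exact fun hh => absurd hh.symm hij

lemma vecMul_inj {n : ℕ} (B : Matrix (Fin n) (Fin n) ℤ) (hd : B.det ≠ 0)
    {v w : Fin n → ℤ} (hvw : v ᵥ* B = w ᵥ* B) : v = w := by
  have h0 : (v - w) ᵥ* B = 0 := by
    rw [Matrix.sub_vecMul, hvw, sub_self]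
  have h1 : (v - w) ᵥ* (B * B.adjugate) = 0 := by
    rw [← Matrix.vecMul_vecMul, h0, Matrix.zero_vecMul]
  rw [Matrix.mul_adjugate] at h1
  have h2 : B.det • (v - w) = 0 := by
    funext j
    have := congrFun h1 j
    simpa [Matrix.vecMul, dotProduct, Matrix.one_apply, Finset.sum_ite_eq', mul_comm] using this
  rcases smul_eq_zero.mp h2 with h3 | h3
  · exact absurd h3 hd
  · exact sub_eq_zero.mp h3

lemma mem_iff {n : ℕ} (B C : Matrix (Fin n) (Fin n) ℤ) (m : Fin n → ℤ)
    (hm : ∀ i, 0 < m i) (hCuni : ∀ j : Fin n, Finset.univ.gcd (fun i => C i j) = 1)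
    (h : Cᵀ * B = Matrix.diagonal m) (i : Fin n) (k : ℤ) :
    (k • Pi.single i 1 : Fin n → ℤ) ∈ rowSpace B ↔ m i ∣ k := by
  have hdet : B.det ≠ 0 := by
    intro h0
    have : (Cᵀ * B).det = 0 := by rw [Matrix.det_mul, h0, mul_zero]
    rw [h, Matrix.det_diagonal] at this
    exact absurd this (ne_of_gt (Finset.prod_pos fun j _ => hm j))
  have hrow := keyrow B C m h i
  constructor
  · rintro ⟨v, hv⟩
    have heq : (m i • v) ᵥ* B = (k • fun j => C j i) ᵥ* B := by
      rw [Matrix.smul_vecMul, Matrix.smul_vecMul]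
      have hv' : v ᵥ* B = k • Pi.single i 1 := hv
      have hr' : (fun j => C j i) ᵥ* B = m i • Pi.single i 1 := hrow
      rw [hv', hr', smul_comm]
    have heq2 := vecMul_inj B hdet heq
    have hdvd : ∀ j, m i ∣ k * C j i := by
      intro j
      have := congrFun heq2 j
      simp only [Pi.smul_apply, smul_eq_mul] at this
      exact ⟨v j, by rw [← this]⟩
    have hg : m i ∣ Finset.univ.gcd (fun j => k * C j i) :=
      Finset.dvd_gcd fun j _ => hdvd j
    rw [Finset.gcd_mul_left, hCuni i, mul_one] at hg
    exact (dvd_normalize_iff).mp hg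
  · rintro ⟨c, rfl⟩
    refine ⟨c • fun j => C j i, ?_⟩
    show (c • fun j => C j i) ᵥ* B = _
    rw [Matrix.smul_vecMul]
    have hr' : (fun j => C j i) ᵥ* B = m i • Pi.single i 1 := hrow
    rw [hr', smul_smul, mul_comm]

lemma order_eq {n : ℕ} (A : Matrix (Fin n) (Fin n) ℤ) (mi : ℤ) (hmi : 0 < mi) (i : Fin n)
    (hiff : ∀ k : ℤ, (k • Pi.single i 1 : Fin n → ℤ) ∈ rowSpace A ↔ mi ∣ k) :
    addOrderOf (Submodule.Quotient.mk (Pi.single i (1:ℤ)) :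
      (Fin n → ℤ) ⧸ rowSpace A) = mi.toNat := by
  have key : ∀ k : ℕ, (k • (Submodule.Quotient.mk (Pi.single i (1:ℤ)) :
      (Fin n → ℤ) ⧸ rowSpace A) = 0) ↔ mi ∣ (k : ℤ) := by
    intro k
    rw [← natCast_zsmul, ← Submodule.Quotient.mk_smul, Submodule.Quotient.mk_eq_zero]
    exact hiff (k : ℤ)
  have hp : 0 < mi.toNat := by omega
  rw [addOrderOf_eq_iff hp]
  constructor
  · rw [key]
    refine ⟨1, ?_⟩
    omega
  · intro j hj hj0 hc
    rw [key] at hc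
    have := Int.le_of_dvd (by exact_mod_cast hj0) hc
    omega

theorem stmt12 {n : ℕ} (B C : Matrix (Fin n) (Fin n) ℤ)
    (hB : WeaklyNonsingular B) (hC : WeaklyNonsingular C)
    (m : Fin n → ℤ) (hm : ∀ i, 0 < m i)
    (h : Cᵀ * B = Matrix.diagonal m) (i : Fin n) :
    addOrderOf (Submodule.Quotient.mk (Pi.single i (1 : ℤ)) :
        (Fin n → ℤ) ⧸ rowSpace B) = (m i).toNat ∧
    addOrderOf (Submodule.Quotient.mk (Pi.single i (1 : ℤ)) :
        (Fin n → ℤ) ⧸ rowSpace C) = (m i).toNat := by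
  constructor
  · exact order_eq B (m i) (hm i) i (fun k => mem_iff B C m hm hC.2 h i k)
  · have h' : Bᵀ * C = Matrix.diagonal m := by
      have := congrArg Matrix.transpose h
      rwa [Matrix.transpose_mul, Matrix.transpose_transpose, Matrix.diagonal_transpose] at this
    exact order_eq C (m i) (hm i) i (fun k => mem_iff C B m hm hB.2 h' i k)
end

section
/- Let s ≥ 1 be an integer and set M = (s+1)². In the ring ℚ⟦z⟧ of formal power series over ℚ, let A = (∏_{i=1}^{M−1}(1 − z^i)) · (1 + Σ_{j=1}^{s} z^{j²}·((1−z)(1−z²)⋯(1−z^j))^{−2}), where the inverses are taken in ℚ⟦z⟧ (each factor (1−z)(1−z²)⋯(1−z^j) is a unit, having constant term 1). Then the coefficient of z^0 in A equals 1, the coefficient of z^m in A equals 0 for every m with 1 ≤ m ≤ M+1, and the coefficient of z^{M+2} in A equals −1. -/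
/-- The series `(∏_{i=1}^{(s+1)²-1} (1 - z^i)) · (1 + Σ_{j=1}^{s} z^{j²}·((1-z)⋯(1-z^j))^{-2})`
in `ℚ⟦z⟧`. -/
noncomputable def seriesA (s : ℕ) : PowerSeries ℚ :=
  (∏ i ∈ Finset.Icc 1 ((s + 1) ^ 2 - 1), (1 - (PowerSeries.X : PowerSeries ℚ) ^ i)) *
    (1 + ∑ j ∈ Finset.Icc 1 s, (PowerSeries.X : PowerSeries ℚ) ^ (j ^ 2) *
      ((∏ t ∈ Finset.Icc 1 j, (1 - (PowerSeries.X : PowerSeries ℚ) ^ t))⁻¹) ^ 2)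

namespace Stmt18


local notation "X" => (PowerSeries.X : PowerSeries ℚ)

noncomputable def P (n : ℕ) : PowerSeries ℚ :=
  ∏ i ∈ Finset.Icc 1 n, (1 - X ^ i)

lemma constP (n : ℕ) : PowerSeries.constantCoeff (P n) = 1 := by
  rw [P, map_prod]
  apply Finset.prod_eq_one
  intro i hi
  rw [Finset.mem_Icc] at hi
  simp [zero_pow (by omega : i ≠ 0)]

lemma P_ne (n : ℕ) : PowerSeries.constantCoeff (P n) ≠ 0 := by
  rw [constP]; exact one_ne_zero

lemma P_mul_inv (n : ℕ) : P n * (P n)⁻¹ = 1 := PowerSeries.mul_inv_cancel _ (P_ne n)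

lemma P_inv_mul (n : ℕ) : (P n)⁻¹ * P n = 1 := PowerSeries.inv_mul_cancel _ (P_ne n)

lemma inv_eq_of_mul {u v : PowerSeries ℚ} (hu : PowerSeries.constantCoeff u ≠ 0)
    (h : u * v = 1) : u⁻¹ = v := by
  have h2 := PowerSeries.inv_mul_cancel _ hu
  calc u⁻¹ = u⁻¹ * (u * v) := by rw [h, mul_one]
  _ = (u⁻¹ * u) * v := by ring
  _ = v := by rw [h2, one_mul]

lemma P_zero : P 0 = 1 := by simp [P]

lemma P_split {a b : ℕ} (hab : a ≤ b) :
    P b = P a * ∏ i ∈ Finset.Icc (a + 1) b, (1 - X ^ i) := by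
  rw [P, P, show Finset.Icc 1 b = Finset.Ioc 0 b from Finset.Icc_add_one_left_eq_Ioc 0 b,
    show Finset.Icc 1 a = Finset.Ioc 0 a from Finset.Icc_add_one_left_eq_Ioc 0 a,
    Finset.Icc_add_one_left_eq_Ioc a b]
  rw [← Finset.prod_Ioc_consecutive _ (Nat.zero_le a) hab]

lemma P_succ (n : ℕ) : P (n + 1) = P n * (1 - X ^ (n + 1)) := by
  rw [P_split (Nat.le_succ n)]
  simp

lemma inv_P_step (n : ℕ) : (P n)⁻¹ = (1 - X ^ (n + 1)) * (P (n + 1))⁻¹ := by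
  apply inv_eq_of_mul (P_ne n)
  calc P n * ((1 - X ^ (n+1)) * (P (n+1))⁻¹) = P (n+1) * (P (n+1))⁻¹ := by
        rw [P_succ]; ring
  _ = 1 := P_mul_inv _

lemma dvd_one_sub_prod {a : ℕ} {F : Finset ℕ} (h : ∀ i ∈ F, a ≤ i) :
    X ^ a ∣ (1 - ∏ i ∈ F, (1 - X ^ i)) := by
  induction F using Finset.cons_induction with
  | empty => simp
  | cons c F hc ih =>
    rw [Finset.prod_cons]
    have h1 : 1 - (1 - X ^ c) * ∏ i ∈ F, (1 - X ^ i)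
        = (1 - ∏ i ∈ F, (1 - X ^ i)) + X ^ c * ∏ i ∈ F, (1 - X ^ i) := by ring
    rw [h1]
    refine dvd_add (ih fun i hi => h i (Finset.mem_cons_of_mem hi)) ?_
    exact Dvd.dvd.mul_right (pow_dvd_pow _ (h c (Finset.mem_cons_self _ _))) _

lemma inv_sub_inv {u v d : PowerSeries ℚ} (hu : PowerSeries.constantCoeff u ≠ 0)
    (hv : PowerSeries.constantCoeff v ≠ 0) (h : d ∣ v - u) : d ∣ u⁻¹ - v⁻¹ := by
  have key : u⁻¹ - v⁻¹ = u⁻¹ * (v - u) * v⁻¹ := by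
    have e : u⁻¹ * (v - u) * v⁻¹ = u⁻¹ * (v * v⁻¹) - (u⁻¹ * u) * v⁻¹ := by ring
    rw [e, PowerSeries.mul_inv_cancel _ hv, PowerSeries.inv_mul_cancel _ hu, mul_one, one_mul]
  rw [key]
  exact ((h.mul_left _).mul_right _)

noncomputable def G (n j : ℕ) : PowerSeries ℚ :=
  if j ≤ n then P n * (P j)⁻¹ * (P (n - j))⁻¹ else 0

lemma G_zero (n : ℕ) : G n 0 = 1 := by
  rw [G, if_pos (Nat.zero_le n)]
  simp only [Nat.sub_zero, P_zero, inv_one, mul_one]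
  exact P_mul_inv n

lemma G_self (n : ℕ) : G n n = 1 := by
  rw [G, if_pos le_rfl]
  simp only [Nat.sub_self, P_zero, inv_one, mul_one]
  exact P_mul_inv n

lemma G_of_gt {n j : ℕ} (h : n < j) : G n j = 0 := by
  rw [G, if_neg (by omega)]

lemma G_symm {n j : ℕ} (h : j ≤ n) : G n (n - j) = G n j := by
  rw [G, G, if_pos (Nat.sub_le _ _), if_pos h, Nat.sub_sub_self h]
  ring

lemma pascal (n j : ℕ) (hn : 1 ≤ n) (hj : 1 ≤ j) :
    G n j = G (n - 1) j + X ^ (n - j) * G (n - 1) (j - 1) := by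
  rcases lt_or_ge n j with hlt | hle
  · rw [G_of_gt hlt, G_of_gt (by omega), G_of_gt (by omega)]
    simp
  rcases eq_or_lt_of_le hle with rfl | hlt
  · rw [G_self, G_of_gt (by omega), G_self, Nat.sub_self]
    simp
  -- j < n
  obtain ⟨c, rfl⟩ : ∃ c, j = c + 1 := ⟨j - 1, by omega⟩
  obtain ⟨b, rfl⟩ : ∃ b, n = c + b + 2 := ⟨n - c - 2, by omega⟩
  have e1 : c + b + 2 - 1 = c + b + 1 := by omega
  have e2 : c + b + 2 - (c + 1) = b + 1 := by omega
  have e3 : c + b + 1 - (c + 1) = b := by omega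
  have e4 : c + 1 - 1 = c := by omega
  have e5 : c + b + 1 - c = b + 1 := by omega
  rw [e1, e2, e4]
  rw [G, if_pos (by omega), G, if_pos (by omega), G, if_pos (by omega), e2, e3, e5]
  rw [show P (c+b+2) = P (c+b+1) * (1 - X ^ (c+b+2)) from P_succ _,
    show (P b)⁻¹ = (1 - X ^ (b+1)) * (P (b+1))⁻¹ from inv_P_step _,
    show (P c)⁻¹ = (1 - X ^ (c+1)) * (P (c+1))⁻¹ from inv_P_step _]
  ring

lemma vand (m n : ℕ) : ∀ k, G (m + n) k
    = ∑ j ∈ Finset.range (k + 1), X ^ ((m - j) * (k - j)) * G m j * G n (k - j) := by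
  induction n with
  | zero =>
    intro k
    rw [Finset.sum_eq_single k]
    · simp only [Nat.sub_self, Nat.mul_zero, pow_zero, one_mul, G_zero, mul_one, Nat.add_zero]
    · intro j hj hne
      have hjk : j < k := by
        rw [Finset.mem_range] at hj; omega
      rw [G_of_gt (show (0:ℕ) < k - j by omega), mul_zero]
    · intro h; exact absurd (Finset.self_mem_range_succ k) h
  | succ n ih =>
    intro k
    rcases Nat.eq_zero_or_pos k with rfl | hk
    · simp [G_zero]
    obtain ⟨k', rfl⟩ : ∃ k', k = k' + 1 := ⟨k - 1, by omega⟩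
    have hP := pascal (m + n + 1) (k' + 1) (by omega) (by omega)
    simp only [Nat.add_sub_cancel] at hP
    rw [show m + (n + 1) = m + n + 1 from by omega, hP]
    rw [Finset.sum_range_succ]
    simp only [Nat.sub_self, Nat.mul_zero, pow_zero, one_mul, G_zero, mul_one]
    have hsplit : ∀ j ∈ Finset.range (k' + 1),
        X ^ ((m - j) * (k' + 1 - j)) * G m j * G (n + 1) (k' + 1 - j)
        = (X ^ ((m - j) * (k' + 1 - j)) * G m j * G n (k' + 1 - j))
          + X ^ (m + n + 1 - (k' + 1)) * (X ^ ((m - j) * (k' - j)) * G m j * G n (k' - j)) := by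
      intro j hj
      rw [Finset.mem_range] at hj
      have hjk : j ≤ k' := by omega
      rw [pascal (n + 1) (k' + 1 - j) (by omega) (by omega)]
      simp only [Nat.add_sub_cancel, show k' + 1 - j - 1 = k' - j from by omega]
      rw [mul_add]
      congr 1
      by_cases h1 : G m j = 0
      · simp [h1]
      by_cases h2 : G n (k' - j) = 0
      · simp [h2]
      have hjm : j ≤ m := by
        by_contra hc
        exact h1 (G_of_gt (by omega))
      have hkn : k' - j ≤ n := by
        by_contra hc
        exact h2 (G_of_gt (by omega))
      have hexp : (m - j) * (k' + 1 - j) + (n + 1 - (k' + 1 - j))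
          = (m + n + 1 - (k' + 1)) + (m - j) * (k' - j) := by
        rw [show k' + 1 - j = (k' - j) + 1 from by omega, Nat.mul_succ]
        generalize (m - j) * (k' - j) = p
        omega
      calc X ^ ((m - j) * (k' + 1 - j)) * G m j * (X ^ (n + 1 - (k' + 1 - j)) * G n (k' - j))
          = X ^ ((m - j) * (k' + 1 - j) + (n + 1 - (k' + 1 - j))) * (G m j * G n (k' - j)) := by
            rw [pow_add]; ring
        _ = X ^ ((m + n + 1 - (k' + 1)) + (m - j) * (k' - j)) * (G m j * G n (k' - j)) := by
            rw [hexp]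
        _ = X ^ (m + n + 1 - (k' + 1)) * (X ^ ((m - j) * (k' - j)) * G m j * G n (k' - j)) := by
            rw [pow_add]; ring
    rw [Finset.sum_congr rfl hsplit, Finset.sum_add_distrib, ← Finset.mul_sum, ← ih k']
    rw [ih (k' + 1), Finset.sum_range_succ]
    simp only [Nat.sub_self, Nat.mul_zero, pow_zero, one_mul, G_zero, mul_one]
    ring

lemma vand2 (N : ℕ) : G (2 * N) N = ∑ j ∈ Finset.range (N + 1), X ^ (j ^ 2) * (G N j) ^ 2 := by
  rw [show 2 * N = N + N from by ring, vand N N N, ← Finset.sum_range_reflect]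
  apply Finset.sum_congr rfl
  intro j hj
  rw [Finset.mem_range] at hj
  have h1 : N + 1 - 1 - j = N - j := by omega
  rw [h1, show N - (N - j) = j from by omega, G_symm (show j ≤ N by omega)]
  rw [show j ^ 2 = j * j from by ring]
  ring

lemma inv_mul_P {a b : ℕ} (hab : a ≤ b) :
    (P a)⁻¹ * P b = ∏ i ∈ Finset.Icc (a + 1) b, (1 - X ^ i) := by
  rw [P_split hab, ← mul_assoc, P_inv_mul, one_mul]

lemma dvd_mul_sub_mul {d a b c e : PowerSeries ℚ} (h1 : d ∣ a - b) (h2 : d ∣ c - e) :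
    d ∣ a * c - b * e := by
  have key : a * c - b * e = a * (c - e) + (a - b) * e := by ring
  rw [key]
  exact dvd_add (h2.mul_left a) (h1.mul_right e)

lemma modC {k : ℕ} (hk : 2 ≤ k) : X ^ 3 ∣ P k - P 2 := by
  rw [P_split hk]
  have e : P 2 * (∏ i ∈ Finset.Icc 3 k, (1 - X ^ i)) - P 2
      = -(P 2 * (1 - ∏ i ∈ Finset.Icc 3 k, (1 - X ^ i))) := by ring
  rw [e]
  exact (Dvd.dvd.mul_left (dvd_one_sub_prod (by
    intro i hi; exact (Finset.mem_Icc.mp hi).1)) _).neg_right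

lemma modCinv {k : ℕ} (hk : 2 ≤ k) : X ^ 3 ∣ (P k)⁻¹ - (P 2)⁻¹ := by
  apply inv_sub_inv (P_ne k) (P_ne 2)
  have e : P 2 - P k = -(P k - P 2) := by ring
  rw [e]
  exact (modC hk).neg_right

lemma P_two : P 2 = (1 - X) * (1 - X ^ 2) := by
  rw [P, show Finset.Icc 1 2 = {1, 2} from rfl, Finset.prod_insert (by norm_num),
    Finset.prod_singleton, pow_one]

lemma main_dvd (s M : ℕ) (hs : 1 ≤ s) (hM : M = (s + 1) ^ 2) :
    X ^ (M + 3) ∣ (P (M - 1) * ∑ j ∈ Finset.range (s + 1), X ^ (j ^ 2) * ((P j)⁻¹) ^ 2)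
      - (1 - X ^ (M + 2)) := by
  have hM4 : 4 ≤ M := by
    have : 2 ^ 2 ≤ (s + 1) ^ 2 := Nat.pow_le_pow_left (by omega) 2
    omega
  set N := M + 2 with hN
  -- abbreviations
  set S : PowerSeries ℚ := ∑ j ∈ Finset.range (s + 1), X ^ (j ^ 2) * ((P j)⁻¹) ^ 2 with hS
  set Sg : PowerSeries ℚ := ∑ j ∈ Finset.range (s + 1), X ^ (j ^ 2) * (G N j) ^ 2 with hSg
  set S2 : PowerSeries ℚ := ∑ j ∈ Finset.Ico (s + 2) (N + 1), X ^ (j ^ 2) * (G N j) ^ 2 with hS2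
  set h1 : PowerSeries ℚ := 1 + X ^ M + X ^ (M + 1) + X ^ (M + 2) with hh1
  set h2 : PowerSeries ℚ := 1 + X + 2 * X ^ 2 with hh2
  have hsle : s + 1 ≤ M := by rw [hM]; exact Nat.le_self_pow (by norm_num) _
  have hsM : s + 1 ≤ N := by omega
  -- dvd1
  have dvd1 : X ^ (M + 3) ∣ P (M - 1) * (S - Sg) := by
    apply Dvd.dvd.mul_left
    rw [hS, hSg, ← Finset.sum_sub_distrib]
    apply Finset.dvd_sum
    intro j hj
    rw [Finset.mem_range] at hj
    have hjN : j ≤ N := by omega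
    have hG : G N j = P N * (P j)⁻¹ * (P (N - j))⁻¹ := by rw [G, if_pos hjN]
    have hW : (P (N - j))⁻¹ * P N = ∏ i ∈ Finset.Icc (N - j + 1) N, (1 - X ^ i) :=
      inv_mul_P (Nat.sub_le _ _)
    obtain ⟨t, ht⟩ : X ^ (N - j + 1) ∣ 1 - (P (N - j))⁻¹ * P N := by
      rw [hW]
      exact dvd_one_sub_prod (fun i hi => (Finset.mem_Icc.mp hi).1)
    have hfac : X ^ (j ^ 2) * ((P j)⁻¹) ^ 2 - X ^ (j ^ 2) * (G N j) ^ 2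
        = X ^ (j ^ 2 + (N - j + 1)) *
          (t * (((P j)⁻¹) ^ 2 * (1 + (P (N - j))⁻¹ * P N))) := by
      have e1 : X ^ (j ^ 2) * ((P j)⁻¹) ^ 2 - X ^ (j ^ 2) * (G N j) ^ 2
          = X ^ (j ^ 2) * (((P j)⁻¹) ^ 2 *
            ((1 - (P (N - j))⁻¹ * P N) * (1 + (P (N - j))⁻¹ * P N))) := by
        rw [hG]; ring
      rw [e1, ht, pow_add]; ring
    rw [hfac]
    have hle : M + 3 ≤ j ^ 2 + (N - j + 1) := by
      have hjj : j ≤ j ^ 2 := by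
        rcases Nat.eq_zero_or_pos j with rfl | hj1
        · simp
        · calc j = j * 1 := by ring
            _ ≤ j * j := Nat.mul_le_mul_left j hj1
            _ = j ^ 2 := by ring
      omega
    exact (pow_dvd_pow _ hle).mul_right _
  -- dvd2
  have dvd2 : X ^ (M + 3) ∣ P (M - 1) * G (2 * N) N - h1 := by
    have hG2N : G (2 * N) N = P (2 * N) * (P N)⁻¹ * (P N)⁻¹ := by
      rw [G, if_pos (by omega), show 2 * N - N = N from by omega]
    have hV : (P N)⁻¹ * P (2 * N) = ∏ i ∈ Finset.Icc (N + 1) (2 * N), (1 - X ^ i) :=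
      inv_mul_P (by omega)
    -- Q
    set Q : PowerSeries ℚ := (1 - X ^ M) * (1 - X ^ (M + 1)) * (1 - X ^ (M + 2)) with hQdef
    have hQsplit : P N = P (M - 1) * Q := by
      rw [P_split (show M - 1 ≤ N by omega), show M - 1 + 1 = M from by omega]
      congr 1
      rw [hQdef, show N = (M + 1) + 1 from by omega,
        Finset.prod_Icc_succ_top (by omega), show M + 1 = M + 1 from rfl,
        Finset.prod_Icc_succ_top (by omega), Finset.Icc_self, Finset.prod_singleton]
    have hQc : PowerSeries.constantCoeff Q ≠ 0 := by
      rw [hQdef]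
      simp [zero_pow (show M ≠ 0 by omega), zero_pow (show M + 1 ≠ 0 by omega),
        zero_pow (show M + 2 ≠ 0 by omega)]
    have hQinv : Q⁻¹ = P (M - 1) * (P N)⁻¹ := by
      apply inv_eq_of_mul hQc
      calc Q * (P (M - 1) * (P N)⁻¹) = (P (M - 1) * Q) * (P N)⁻¹ := by ring
        _ = P N * (P N)⁻¹ := by rw [← hQsplit]
        _ = 1 := P_mul_inv N
    have hdecomp : P (M - 1) * G (2 * N) N - h1
        = Q⁻¹ * ((∏ i ∈ Finset.Icc (N + 1) (2 * N), (1 - X ^ i)) - 1) + (Q⁻¹ - h1) := by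
      rw [hQinv, hG2N, ← hV]; ring
    rw [hdecomp]
    apply dvd_add
    · apply Dvd.dvd.mul_left
      have : (∏ i ∈ Finset.Icc (N + 1) (2 * N), (1 - X ^ i)) - 1
          = -(1 - ∏ i ∈ Finset.Icc (N + 1) (2 * N), (1 - X ^ i)) := by ring
      rw [this]
      refine Dvd.dvd.neg_right ?_
      have h := dvd_one_sub_prod (a := N + 1)
        (F := Finset.Icc (N + 1) (2 * N)) (fun i hi => (Finset.mem_Icc.mp hi).1)
      exact (pow_dvd_pow _ (show M + 3 ≤ N + 1 by omega)).trans h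
    · have e2 : Q⁻¹ - h1 = Q⁻¹ * (1 - Q * h1) := by
        have : Q⁻¹ * (1 - Q * h1) = Q⁻¹ - (Q⁻¹ * Q) * h1 := by ring
        rw [this, PowerSeries.inv_mul_cancel _ hQc, one_mul]
      rw [e2]
      apply Dvd.dvd.mul_left
      have hwit : 1 - Q * h1 = X ^ (2 * M) *
          ((1 + X + 2 * X ^ 2 + X ^ 3 + X ^ 4)
            - X ^ M * (X + 2 * X ^ 2 + 2 * X ^ 3 + 2 * X ^ 4 + X ^ 5)
            + X ^ M * X ^ M * (X ^ 3 + X ^ 4 + X ^ 5)) := by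
        rw [hQdef, hh1, show X ^ (M + 1) = X ^ M * X from by rw [pow_succ],
          show X ^ (M + 2) = X ^ M * X ^ 2 from by rw [pow_add],
          show X ^ (2 * M) = X ^ M * X ^ M from by rw [two_mul, pow_add]]
        ring
      rw [hwit]
      exact (pow_dvd_pow _ (show M + 3 ≤ 2 * M by omega)).mul_right _
  -- dvd3
  have dvd3 : X ^ 3 ∣ P (M - 1) * (G N (s + 1)) ^ 2 - h2 := by
    have hGs : G N (s + 1) = P N * (P (s + 1))⁻¹ * (P (N - (s + 1)))⁻¹ := by
      rw [G, if_pos hsM]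
    have hprod : P (M - 1) * (G N (s + 1)) ^ 2
        = (P (M - 1) * (P N * P N)) *
          (((P (s + 1))⁻¹ * (P (s + 1))⁻¹) * ((P (N - (s + 1)))⁻¹ * (P (N - (s + 1)))⁻¹)) := by
      rw [hGs]; ring
    have hA : X ^ 3 ∣ P (M - 1) * (P N * P N) - P 2 * (P 2 * P 2) :=
      dvd_mul_sub_mul (modC (by omega)) (dvd_mul_sub_mul (modC (by omega)) (modC (by omega)))
    have hB : X ^ 3 ∣ ((P (s + 1))⁻¹ * (P (s + 1))⁻¹) * ((P (N - (s + 1)))⁻¹ * (P (N - (s + 1)))⁻¹)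
        - ((P 2)⁻¹ * (P 2)⁻¹) * ((P 2)⁻¹ * (P 2)⁻¹) := by
      have hs2 : 2 ≤ s + 1 := by omega
      have hns2 : 2 ≤ N - (s + 1) := by
        have : 2 * (s + 1) ≤ (s + 1) ^ 2 := by nlinarith
        omega
      exact dvd_mul_sub_mul (dvd_mul_sub_mul (modCinv hs2) (modCinv hs2))
        (dvd_mul_sub_mul (modCinv hns2) (modCinv hns2))
    have hbe : (P 2 * (P 2 * P 2)) * (((P 2)⁻¹ * (P 2)⁻¹) * ((P 2)⁻¹ * (P 2)⁻¹)) = (P 2)⁻¹ := by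
      have h := P_mul_inv 2
      calc (P 2 * (P 2 * P 2)) * (((P 2)⁻¹ * (P 2)⁻¹) * ((P 2)⁻¹ * (P 2)⁻¹))
          = (P 2 * (P 2)⁻¹) * ((P 2 * (P 2)⁻¹) * ((P 2 * (P 2)⁻¹) * (P 2)⁻¹)) := by ring
        _ = (P 2)⁻¹ := by rw [h]; ring
    have hD : X ^ 3 ∣ (P 2)⁻¹ - h2 := by
      have e2 : (P 2)⁻¹ - h2 = (P 2)⁻¹ * (1 - P 2 * h2) := by
        have : (P 2)⁻¹ * (1 - P 2 * h2) = (P 2)⁻¹ - ((P 2)⁻¹ * P 2) * h2 := by ring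
        rw [this, P_inv_mul, one_mul]
      have hwit : 1 - P 2 * h2 = X ^ 3 * (2 + X - 2 * X ^ 2) := by
        rw [P_two, hh2]; ring
      rw [e2, hwit]
      exact (dvd_mul_right _ _).mul_left _
    have key : P (M - 1) * (G N (s + 1)) ^ 2 - h2
        = ((P (M - 1) * (P N * P N)) *
            (((P (s + 1))⁻¹ * (P (s + 1))⁻¹) * ((P (N - (s + 1)))⁻¹ * (P (N - (s + 1)))⁻¹))
          - (P 2 * (P 2 * P 2)) * (((P 2)⁻¹ * (P 2)⁻¹) * ((P 2)⁻¹ * (P 2)⁻¹)))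
          + ((P 2)⁻¹ - h2) := by
      rw [hbe, ← hprod]; ring
    rw [key]
    exact dvd_add (dvd_mul_sub_mul hA hB) hD
  -- dvd4
  have dvd4 : X ^ (M + 3) ∣ P (M - 1) * S2 := by
    apply Dvd.dvd.mul_left
    rw [hS2]
    apply Finset.dvd_sum
    intro j hj
    rw [Finset.mem_Ico] at hj
    have hle : M + 3 ≤ j ^ 2 := by
      have h1 : (s + 2) ^ 2 ≤ j ^ 2 := Nat.pow_le_pow_left (by omega) 2
      have h2 : (s + 2) ^ 2 = s ^ 2 + 4 * s + 4 := by ring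
      have h3 : (s + 1) ^ 2 = s ^ 2 + 2 * s + 1 := by ring
      omega
    exact (pow_dvd_pow _ hle).mul_right _
  -- sum splitting
  have hsplit : G (2 * N) N = Sg + (X ^ M * (G N (s + 1)) ^ 2 + S2) := by
    rw [vand2 N, ← Finset.sum_range_add_sum_Ico _ (show s + 1 ≤ N + 1 by omega),
      Finset.sum_eq_sum_Ico_succ_bot (show s + 1 < N + 1 by omega), ← hM]
  -- master equation
  have master : P (M - 1) * S - (1 - X ^ (M + 2))
      = P (M - 1) * (S - Sg)
        + (P (M - 1) * G (2 * N) N - h1)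
        + (-(X ^ M * (P (M - 1) * (G N (s + 1)) ^ 2 - h2)))
        + (-(P (M - 1) * S2)) := by
    rw [hsplit, hh1, hh2, show X ^ (M + 1) = X ^ M * X from by rw [pow_succ],
      show X ^ (M + 2) = X ^ M * X ^ 2 from by rw [pow_add]]
    ring
  rw [master]
  refine dvd_add (dvd_add (dvd_add dvd1 dvd2) ?_) dvd4.neg_right
  refine Dvd.dvd.neg_right ?_
  rw [show M + 3 = M + 3 from rfl, show (X : PowerSeries ℚ) ^ (M + 3) = X ^ M * X ^ 3 from by
    rw [pow_add]]
  exact mul_dvd_mul_left _ dvd3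

end Stmt18

theorem stmt18 (s : ℕ) (hs : 1 ≤ s) :
    PowerSeries.coeff 0 (seriesA s) = 1 ∧
    (∀ m : ℕ, 1 ≤ m → m ≤ (s + 1) ^ 2 + 1 → PowerSeries.coeff m (seriesA s) = 0) ∧
    PowerSeries.coeff ((s + 1) ^ 2 + 2) (seriesA s) = -1 := by
  have hA : seriesA s = Stmt18.P ((s + 1) ^ 2 - 1) *
      ∑ j ∈ Finset.range (s + 1),
        (PowerSeries.X : PowerSeries ℚ) ^ (j ^ 2) * ((Stmt18.P j)⁻¹) ^ 2 := by
    rw [seriesA]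
    congr 1
    rw [show Finset.range (s + 1) = insert 0 (Finset.Icc 1 s) from by
        ext x; simp [Finset.mem_Icc, Finset.mem_range]; omega,
      Finset.sum_insert (by simp)]
    simp [Stmt18.P]
  have main := Stmt18.main_dvd s ((s + 1) ^ 2) hs rfl
  rw [← hA] at main
  obtain ⟨r, hr⟩ := main
  have hser : seriesA s = (1 - (PowerSeries.X : PowerSeries ℚ) ^ ((s + 1) ^ 2 + 2))
      + (PowerSeries.X : PowerSeries ℚ) ^ ((s + 1) ^ 2 + 3) * r := by
    rw [← hr]; ring
  have hcoeff : ∀ m, m < (s + 1) ^ 2 + 3 → PowerSeries.coeff m (seriesA s)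
      = PowerSeries.coeff m (1 - (PowerSeries.X : PowerSeries ℚ) ^ ((s + 1) ^ 2 + 2)) := by
    intro m hm
    rw [hser, map_add, PowerSeries.X_pow_dvd_iff.mp (dvd_mul_right _ r) m hm, add_zero]
  refine ⟨?_, ?_, ?_⟩
  · rw [hcoeff 0 (by omega), map_sub, PowerSeries.coeff_one, PowerSeries.coeff_X_pow,
      if_pos rfl, if_neg (by omega)]
    ring
  · intro m h1 h2
    rw [hcoeff m (by omega), map_sub, PowerSeries.coeff_one, PowerSeries.coeff_X_pow,
      if_neg (by omega), if_neg (by omega)]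
    ring
  · rw [hcoeff _ (by omega), map_sub, PowerSeries.coeff_one, PowerSeries.coeff_X_pow,
      if_pos rfl, if_neg (by omega)]
    ring
end

section
/- Fix an integer n ≥ 2. Call an n×n integer matrix C weakly terminal if C is upper triangular (C_{ij} = 0 for j < i), C_{jj} > 0 for all j, 0 ≤ C_{ij} < C_{jj} for all i < j, and every column of C is unimodular (the gcd of its entries is 1). Then for every positive integer d, the number of weakly terminal n×n matrices of determinant d equals (φ * J_2 * J_3 * ⋯ * J_{n−1})(d), where * is Dirichlet convolution, φ is Euler's totient, and J_k is the k-th Jordan totient J_k(m) = Σ_{e ∣ m} μ(m/e)·e^k (with μ the Möbius function; J_1 = φ). -/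
/-- An upper-triangular positive-diagonal reduced integer matrix with unimodular
columns ("weakly terminal"). -/
def WeaklyTerminal {n : ℕ} (C : Matrix (Fin n) (Fin n) ℤ) : Prop :=
  (∀ i j : Fin n, j < i → C i j = 0) ∧
  (∀ j : Fin n, 0 < C j j) ∧
  (∀ i j : Fin n, i < j → 0 ≤ C i j ∧ C i j < C j j) ∧
  (∀ j : Fin n, Finset.univ.gcd (fun i => C i j) = 1)

/-- Dirichlet convolution of two arithmetic functions (defined on positive inputs). -/
def dConv (f g : ℕ → ℤ) : ℕ → ℤ := fun m => ∑ e ∈ m.divisors, f e * g (m / e)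

/-- The `k`-th Jordan totient `J_k(m) = Σ_{e ∣ m} μ(m/e) e^k`. -/
def jordan (k : ℕ) : ℕ → ℤ := fun m =>
  ∑ e ∈ m.divisors, ArithmeticFunction.moebius (m / e) * (e : ℤ) ^ k

/-- `phiJ n = φ * J_2 * J_3 * ⋯ * J_{n-1}` (Dirichlet convolution), for `n ≥ 2`. -/
def phiJ : ℕ → ℕ → ℤ
  | 0 => fun m => if m = 1 then 1 else 0
  | 1 => fun m => if m = 1 then 1 else 0
  | 2 => fun m => (Nat.totient m : ℤ)
  | (k + 3) => dConv (phiJ (k + 2)) (jordan (k + 2))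


open Finset ArithmeticFunction

lemma gcd_snoc {k : ℕ} (f : Fin k → ℤ) (x : ℤ) :
    (Finset.univ.gcd (Fin.snoc f x : Fin (k+1) → ℤ)) = GCDMonoid.gcd x (Finset.univ.gcd f) := by
  classical
  rw [Fin.univ_castSuccEmb, Finset.cons_eq_insert, Finset.gcd_insert, Fin.snoc_last,
    Finset.map_eq_image, Finset.gcd_image]
  congr 1
  apply Finset.gcd_congr rfl
  intro i _
  simp

lemma sum_moebius (g : ℕ) : ∑ e ∈ g.divisors, (moebius e : ℤ) = if g = 1 then 1 else 0 := by
  have h := ArithmeticFunction.coe_mul_zeta_apply (f := moebius) (x := g)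
  rw [ArithmeticFunction.moebius_mul_coe_zeta] at h
  rw [← h, ArithmeticFunction.one_apply]

lemma Finset.gcd_intCast {β : Type*} (s : Finset β) (f : β → ℕ) :
    s.gcd (fun b => (f b : ℤ)) = ((s.gcd f : ℕ) : ℤ) := by
  classical
  induction s using Finset.induction_on with
  | empty => simp
  | insert _ _ h ih =>
      rw [Finset.gcd_insert, Finset.gcd_insert, ih, ← Int.coe_gcd, Int.gcd_natCast_natCast]
      rfl

lemma jordan_eq (k m : ℕ) (hm : m ≠ 0) :
    jordan k m = ∑ e ∈ m.divisors, (moebius e : ℤ) * ((m / e : ℕ) : ℤ) ^ k := by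
  have h := Nat.sum_div_divisors m (fun d => (moebius (m / d) : ℤ) * (d : ℤ) ^ k)
  rw [show (Nat.divisors m).sum (fun d => (moebius (m / d) : ℤ) * (d : ℤ) ^ k) = jordan k m from rfl] at h
  rw [← h]
  refine Finset.sum_congr rfl fun d hd => ?_
  rw [Nat.div_div_self (Nat.mem_divisors.mp hd).1 hm]

lemma card_multiples (k m e : ℕ) (he : e ∈ m.divisors) :
    Fintype.card {b : Fin k → Fin m // ∀ i, e ∣ (b i : ℕ)} = (m / e) ^ k := by
  obtain ⟨hdvd, hm⟩ := Nat.mem_divisors.mp he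
  have he0 : 0 < e := Nat.pos_of_dvd_of_pos hdvd (Nat.pos_of_ne_zero hm)
  have h1 : {b : Fin k → Fin m // ∀ i, e ∣ (b i : ℕ)} ≃ (Fin k → {x : Fin m // e ∣ (x : ℕ)}) :=
    (Equiv.subtypePiEquivPi (β := fun _ : Fin k => Fin m) (p := fun _ x => e ∣ (x : ℕ)))
  have h2 : {x : Fin m // e ∣ (x : ℕ)} ≃ Fin (m / e) := by
    refine ⟨fun x => ⟨(x : ℕ) / e, ?_⟩, fun t => ⟨⟨e * t, ?_⟩, ⟨t, rfl⟩⟩, ?_, ?_⟩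
    · exact Nat.div_lt_div_of_lt_of_dvd hdvd x.1.2
    · calc e * (t : ℕ) < e * (m / e) := (Nat.mul_lt_mul_left he0).mpr t.2
        _ = m := Nat.mul_div_cancel' hdvd
    · rintro ⟨⟨x, hx⟩, hd⟩
      obtain ⟨c, rfl⟩ : ∃ c, x = e * c := hd
      ext
      simp [Nat.mul_div_cancel_left _ he0]
    · rintro ⟨t, ht⟩
      ext
      simp [Nat.mul_div_cancel_left _ he0]
  rw [Fintype.card_congr h1, Fintype.card_fun, Fintype.card_congr h2, Fintype.card_fin,
    Fintype.card_fin]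

def Col (k m : ℕ) : Type := {a : Fin k → ℤ //
  (∀ i, 0 ≤ a i ∧ a i < (m : ℤ)) ∧
  Finset.univ.gcd (Fin.snoc a (m : ℤ) : Fin (k+1) → ℤ) = 1}

noncomputable def colEquiv (k m : ℕ) :
    Col k m ≃ {b : Fin k → Fin m // Nat.gcd m (Finset.univ.gcd fun i => (b i : ℕ)) = 1} := by
  have key : ∀ b : Fin k → Fin m,
      (Finset.univ.gcd (Fin.snoc (fun i => ((b i : ℕ) : ℤ)) (m : ℤ) : Fin (k+1) → ℤ) = 1)
        ↔ Nat.gcd m (Finset.univ.gcd fun i => (b i : ℕ)) = 1 := by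
    intro b
    rw [gcd_snoc, Finset.gcd_intCast, ← Int.coe_gcd, Int.gcd_natCast_natCast]
    exact ⟨fun h => by exact_mod_cast h, fun h => by exact_mod_cast h⟩
  refine ⟨fun a => ⟨fun i => ⟨(a.1 i).toNat, ?_⟩, ?_⟩, fun b => ⟨fun i => ((b.1 i : ℕ) : ℤ), ?_, ?_⟩, ?_, ?_⟩
  · have h := a.2.1 i
    omega
  · have h : (fun i => (((a.1 i).toNat : ℕ) : ℤ)) = a.1 := by
      funext i; have := a.2.1 i; omega
    rw [← key]
    convert a.2.2 using 3
  · intro i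
    refine ⟨by positivity, ?_⟩
    show ((b.1 i : ℕ) : ℤ) < (m : ℤ)
    exact_mod_cast (b.1 i).2
  · rw [key]; exact b.2
  · rintro ⟨a, ha⟩
    apply Subtype.ext
    funext i
    have := ha.1 i
    simp only
    omega
  · rintro ⟨b, hb⟩
    apply Subtype.ext
    funext i
    apply Fin.ext
    simp
noncomputable instance (k m : ℕ) : Fintype (Col k m) := Fintype.ofEquiv _ (colEquiv k m).symm

lemma col_card (k m : ℕ) (hm : 0 < m) : (Nat.card (Col k m) : ℤ) = jordan k m := by
  classical
  have hm0 : m ≠ 0 := hm.ne'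
  rw [Nat.card_congr (colEquiv k m), Nat.card_eq_fintype_card, Fintype.card_subtype]
  rw [← Finset.sum_boole (fun b : Fin k → Fin m =>
      Nat.gcd m (Finset.univ.gcd fun i => (b i : ℕ)) = 1) Finset.univ]
  have step1 : ∀ b : Fin k → Fin m,
      (if Nat.gcd m (Finset.univ.gcd fun i => (b i : ℕ)) = 1 then (1:ℤ) else 0)
        = ∑ e ∈ m.divisors, if (∀ i, e ∣ (b i : ℕ)) then (moebius e : ℤ) else 0 := by
    intro b
    set G := Nat.gcd m (Finset.univ.gcd fun i => (b i : ℕ)) with hG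
    have hGd : G ∣ m := Nat.gcd_dvd_left _ _
    calc (if G = 1 then (1:ℤ) else 0) = ∑ e ∈ G.divisors, (moebius e : ℤ) := (sum_moebius G).symm
      _ = ∑ e ∈ m.divisors.filter (fun e => e ∣ G), (moebius e : ℤ) := by
          rw [Nat.divisors_filter_dvd_of_dvd hm0 hGd]
      _ = ∑ e ∈ m.divisors, if e ∣ G then (moebius e : ℤ) else 0 := Finset.sum_filter _ _
      _ = _ := by
          refine Finset.sum_congr rfl fun e he => ?_
          have hedvd : e ∣ m := (Nat.mem_divisors.mp he).1
          have hiff : e ∣ G ↔ ∀ i, e ∣ (b i : ℕ) := by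
            rw [hG, Nat.dvd_gcd_iff, Finset.dvd_gcd_iff]
            simp [hedvd]
          simp only [hiff]
  rw [Finset.sum_congr rfl (fun b _ => step1 b), Finset.sum_comm]
  rw [jordan_eq k m hm0]
  refine Finset.sum_congr rfl fun e he => ?_
  calc (∑ x : Fin k → Fin m, if (∀ i, e ∣ (x i : ℕ)) then (moebius e : ℤ) else 0)
      = ∑ x ∈ Finset.univ.filter (fun x : Fin k → Fin m => ∀ i, e ∣ (x i : ℕ)), (moebius e : ℤ) :=
        (Finset.sum_filter _ _).symm
    _ = (Finset.univ.filter (fun x : Fin k → Fin m => ∀ i, e ∣ (x i : ℕ))).card • (moebius e : ℤ) :=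
        Finset.sum_const _
    _ = (moebius e : ℤ) * ((m / e : ℕ) : ℤ) ^ k := by
        rw [← Fintype.card_subtype, card_multiples k m e he, nsmul_eq_mul, mul_comm]
        push_cast
        ring

def WTset (n d : ℕ) : Type :=
  {C : Matrix (Fin n) (Fin n) ℤ // WeaklyTerminal C ∧ C.det = (d : ℤ)}

lemma wt_det_eq {n : ℕ} (C : Matrix (Fin n) (Fin n) ℤ) (h : WeaklyTerminal C) :
    C.det = ∏ j, C j j :=
  Matrix.det_of_upperTriangular (fun i j hij => h.1 i j hij)

lemma wt_nonneg {n : ℕ} (C : Matrix (Fin n) (Fin n) ℤ) (h : WeaklyTerminal C) (i j : Fin n) :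
    0 ≤ C i j := by
  rcases lt_trichotomy i j with hij | rfl | hij
  · exact (h.2.2.1 i j hij).1
  · exact (h.2.1 i).le
  · rw [h.1 i j hij]

lemma wt_entry_le {n d : ℕ} (C : WTset n d) (i j : Fin n) : C.1 i j ≤ (d : ℤ) := by
  obtain ⟨C, hWT, hdet⟩ := C
  show C i j ≤ (d : ℤ)
  have hprod : ∏ k, C k k = (d : ℤ) := by rw [← wt_det_eq C hWT, hdet]
  have hdiag : ∀ k : Fin n, C k k ≤ (d : ℤ) := by
    intro k
    have hdvd : C k k ∣ ∏ k, C k k := Finset.dvd_prod_of_mem _ (Finset.mem_univ k)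
    rw [hprod] at hdvd
    rcases Nat.eq_zero_or_pos d with rfl | hd
    · exact absurd hprod (by
        have : 0 < ∏ k, C k k := Finset.prod_pos fun k _ => hWT.2.1 k
        simp only [Nat.cast_zero]
        omega)
    · exact Int.le_of_dvd (by exact_mod_cast hd) hdvd
  rcases lt_trichotomy i j with hij | rfl | hij
  · exact le_trans (hWT.2.2.1 i j hij).2.le (hdiag j)
  · exact hdiag i
  · rw [hWT.1 i j hij]
    positivity

instance wtFinite (n d : ℕ) : Finite (WTset n d) := by
  apply Finite.of_injective
    (f := fun C : WTset n d => ((fun i j => (⟨(C.1 i j).toNat, by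
      have h1 := wt_nonneg C.1 C.2.1 i j
      have h2 := wt_entry_le C i j
      omega⟩ : Fin (d+1))) : Fin n → Fin n → Fin (d+1)))
  intro C D h
  apply Subtype.ext
  funext i j
  have h1 := congrFun (congrFun h i) j
  simp only [Fin.mk.injEq] at h1
  have h2 := wt_nonneg C.1 C.2.1 i j
  have h3 := wt_nonneg D.1 D.2.1 i j
  omega

noncomputable instance (n d : ℕ) : Fintype (WTset n d) := Fintype.ofFinite _

lemma wt_base (d : ℕ) : (Nat.card (WTset 1 d) : ℤ) = if d = 1 then 1 else 0 := by
  rcases eq_or_ne d 1 with rfl | hd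
  · rw [if_pos rfl]
    norm_cast
    rw [Nat.card_eq_one_iff_unique]
    constructor
    · constructor
      rintro ⟨C, hC, hdet⟩ ⟨D, hD, hdet'⟩
      apply Subtype.ext
      funext i j
      fin_cases i; fin_cases j
      rw [Matrix.det_fin_one] at hdet hdet'
      simp_all
    · exact ⟨⟨1, ⟨fun i j hij => absurd hij (by omega), fun j => by simp [Matrix.one_apply],
        fun i j hij => absurd hij (by omega), fun j => by
          fin_cases j
          simp [Matrix.one_apply]⟩, by simp⟩⟩
  · rw [if_neg hd]
    norm_cast
    rw [Nat.card_eq_zero]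
    left
    constructor
    rintro ⟨C, hC, hdet⟩
    have h1 : Finset.univ.gcd (fun i : Fin 1 => C i 0) = 1 := hC.2.2.2 0
    have h2 : Finset.univ.gcd (fun i : Fin 1 => C i 0) = normalize (C 0 0) := by
      rw [show (Finset.univ : Finset (Fin 1)) = {0} from rfl, Finset.gcd_singleton]
    have h3 : (0:ℤ) < C 0 0 := hC.2.1 0
    rw [Matrix.det_fin_one] at hdet
    rw [h2, Int.normalize_of_nonneg h3.le] at h1
    rw [h1] at hdet
    omega

def buildMat {n : ℕ} (B : Matrix (Fin n) (Fin n) ℤ) (a : Fin n → ℤ) (m : ℤ) :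
    Matrix (Fin (n+1)) (Fin (n+1)) ℤ :=
  Matrix.of fun i j =>
    (Fin.snoc (α := fun _ => ℤ)
      (fun j' : Fin n => Fin.snoc (α := fun _ => ℤ) (fun i' => B i' j') 0 i)
      (Fin.snoc (α := fun _ => ℤ) a m i)) j

section buildLemmas
variable {n : ℕ} (B : Matrix (Fin n) (Fin n) ℤ) (a : Fin n → ℤ) (m : ℤ)

@[simp] lemma buildMat_cs_cs (i j : Fin n) :
    buildMat B a m i.castSucc j.castSucc = B i j := by simp [buildMat]
@[simp] lemma buildMat_last_cs (j : Fin n) :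
    buildMat B a m (Fin.last n) j.castSucc = 0 := by simp [buildMat]
@[simp] lemma buildMat_cs_last (i : Fin n) :
    buildMat B a m i.castSucc (Fin.last n) = a i := by simp [buildMat]
@[simp] lemma buildMat_last_last : buildMat B a m (Fin.last n) (Fin.last n) = m := by
  simp [buildMat]

lemma buildMat_col_cs (j : Fin n) :
    (fun i => buildMat B a m i j.castSucc) = Fin.snoc (fun i' => B i' j) (0 : ℤ) := by
  funext i
  refine Fin.lastCases ?_ (fun i' => ?_) i <;> simp

lemma buildMat_col_last :
    (fun i => buildMat B a m i (Fin.last n)) = Fin.snoc a m := by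
  funext i
  refine Fin.lastCases ?_ (fun i' => ?_) i <;> simp
end buildLemmas

section step
variable {n d : ℕ}

-- facts about a WT matrix of size n+1 and det d
lemma wt_split (C : Matrix (Fin (n+1)) (Fin (n+1)) ℤ) (hWT : WeaklyTerminal C)
    (hdet : C.det = (d : ℤ)) :
    (∏ j : Fin n, C j.castSucc j.castSucc) * C (Fin.last n) (Fin.last n) = (d : ℤ) := by
  rw [← hdet, wt_det_eq C hWT, Fin.prod_univ_castSucc]

lemma wt_sub (C : Matrix (Fin (n+1)) (Fin (n+1)) ℤ) (hWT : WeaklyTerminal C) :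
    WeaklyTerminal (Matrix.of fun i j : Fin n => C i.castSucc j.castSucc) := by
  refine ⟨fun i j hij => hWT.1 _ _ (by simpa using hij),
    fun j => hWT.2.1 _,
    fun i j hij => hWT.2.2.1 _ _ (by simpa using hij),
    fun j => ?_⟩
  have h1 := hWT.2.2.2 j.castSucc
  have h2 : (fun i : Fin (n+1) => C i j.castSucc)
      = Fin.snoc (fun i' : Fin n => C i'.castSucc j.castSucc) (0 : ℤ) := by
    funext i
    refine Fin.lastCases ?_ (fun i' => ?_) i
    · simp [hWT.1 (Fin.last n) j.castSucc (Fin.castSucc_lt_last j)]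
    · simp
  rw [h2, gcd_snoc, gcd_zero_left, Finset.normalize_gcd] at h1
  exact h1

lemma wt_last_eq (e : ℕ) (hd : 0 < d) (he0 : 0 < e) (hed : e ∣ d)
    (C : Matrix (Fin (n+1)) (Fin (n+1)) ℤ) (hWT : WeaklyTerminal C) (hdet : C.det = (d : ℤ))
    (hE : (∏ j : Fin n, C j.castSucc j.castSucc).toNat = e) :
    (∏ j : Fin n, C j.castSucc j.castSucc) = (e : ℤ) ∧
    C (Fin.last n) (Fin.last n) = ((d / e : ℕ) : ℤ) := by
  have hP : 0 < ∏ j : Fin n, C j.castSucc j.castSucc :=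
    Finset.prod_pos fun j _ => hWT.2.1 _
  have hPe : (∏ j : Fin n, C j.castSucc j.castSucc) = (e : ℤ) := by
    rw [← hE]; exact (Int.toNat_of_nonneg hP.le).symm
  have hsplit := wt_split C hWT hdet
  rw [hPe] at hsplit
  refine ⟨hPe, ?_⟩
  have h1 : (e:ℤ) * C (Fin.last n) (Fin.last n) = (e:ℤ) * ((d/e:ℕ):ℤ) := by
    rw [hsplit, ← Nat.cast_mul, Nat.mul_div_cancel' hed]
  exact mul_left_cancel₀ (by exact_mod_cast he0.ne') h1

noncomputable def stepEquiv (e : ℕ) (hd : 0 < d) (he : e ∈ d.divisors) :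
    {C : WTset (n+1) d // (∏ j : Fin n, C.1 j.castSucc j.castSucc).toNat = e}
      ≃ WTset n e × Col n (d / e) := by
  have hed : e ∣ d := (Nat.mem_divisors.mp he).1
  have he0 : 0 < e := Nat.pos_of_dvd_of_pos hed hd
  have hm0 : 0 < d / e := Nat.div_pos (Nat.le_of_dvd hd hed) he0
  refine ⟨fun X => ?_, fun Y => ?_, ?_, ?_⟩
  · -- forward
    obtain ⟨⟨C, hWT, hdet⟩, hE⟩ := X
    have hE' : (∏ j : Fin n, C j.castSucc j.castSucc).toNat = e := hE
    have hPe := (wt_last_eq e hd he0 hed C hWT hdet hE').1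
    have hMde := (wt_last_eq e hd he0 hed C hWT hdet hE').2
    refine ⟨⟨Matrix.of fun i j : Fin n => C i.castSucc j.castSucc, wt_sub C hWT, ?_⟩,
      ⟨fun i => C i.castSucc (Fin.last n), fun i => ?_, ?_⟩⟩
    · rw [wt_det_eq _ (wt_sub C hWT)]
      exact hPe
    · rw [← hMde]
      exact hWT.2.2.1 _ _ (Fin.castSucc_lt_last i)
    · have h2 : (fun i : Fin (n+1) => C i (Fin.last n))
          = Fin.snoc (fun i' : Fin n => C i'.castSucc (Fin.last n))
              (C (Fin.last n) (Fin.last n)) := by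
        funext i
        refine Fin.lastCases ?_ (fun i' => ?_) i <;> simp
      rw [← hMde, ← h2]
      exact hWT.2.2.2 (Fin.last n)
  · -- backward
    obtain ⟨⟨B, hB, hdetB⟩, ⟨a, hbd, hgcd⟩⟩ := Y
    have hPe : (∏ j : Fin n, B j j) = (e : ℤ) := by rw [← wt_det_eq B hB, hdetB]
    have hWT : WeaklyTerminal (buildMat B a ((d / e : ℕ) : ℤ)) := by
      refine ⟨?_, ?_, ?_, ?_⟩
      · intro i j hij
        revert hij
        refine Fin.lastCases ?_ (fun i' => ?_) i
        · refine Fin.lastCases ?_ (fun j' => ?_) j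
          · exact fun h => absurd h (lt_irrefl _)
          · intro _; simp
        · refine Fin.lastCases ?_ (fun j' => ?_) j
          · exact fun h => absurd (h.trans (Fin.castSucc_lt_last i')) (lt_irrefl _)
          · intro h
            simp only [buildMat_cs_cs]
            exact hB.1 i' j' (by simpa using h)
      · intro j
        refine Fin.lastCases ?_ (fun j' => ?_) j
        · simp only [buildMat_last_last]
          exact_mod_cast hm0
        · simp only [buildMat_cs_cs]
          exact hB.2.1 j'
      · intro i j hij
        revert hij
        refine Fin.lastCases ?_ (fun j' => ?_) j
        · refine Fin.lastCases ?_ (fun i' => ?_) i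
          · exact fun h => absurd h (lt_irrefl _)
          · intro _
            simp only [buildMat_cs_last, buildMat_last_last]
            exact hbd i'
        · refine Fin.lastCases ?_ (fun i' => ?_) i
          · exact fun h => absurd (h.trans (Fin.castSucc_lt_last j')) (lt_irrefl _)
          · intro h
            simp only [buildMat_cs_cs]
            exact hB.2.2.1 i' j' (by simpa using h)
      · intro j
        refine Fin.lastCases ?_ (fun j' => ?_) j
        · rw [buildMat_col_last]
          exact hgcd
        · rw [buildMat_col_cs, gcd_snoc, gcd_zero_left, Finset.normalize_gcd]
          exact hB.2.2.2 j'
    refine ⟨⟨buildMat B a ((d / e : ℕ) : ℤ), hWT, ?_⟩, ?_⟩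
    · rw [wt_det_eq _ hWT, Fin.prod_univ_castSucc]
      simp only [buildMat_cs_cs, buildMat_last_last]
      rw [hPe, ← Nat.cast_mul, Nat.mul_div_cancel' hed]
    · show (∏ j : Fin n, buildMat B a ((d / e : ℕ) : ℤ) j.castSucc j.castSucc).toNat = e
      simp only [buildMat_cs_cs]
      rw [hPe]
      exact Int.toNat_natCast e
  · -- left inverse
    rintro ⟨⟨C, hWT, hdet⟩, hE⟩
    have hE' : (∏ j : Fin n, C j.castSucc j.castSucc).toNat = e := hE
    obtain ⟨hPe, hMde⟩ := wt_last_eq e hd he0 hed C hWT hdet hE'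
    apply Subtype.ext
    apply Subtype.ext
    show buildMat (Matrix.of fun i j : Fin n => C i.castSucc j.castSucc)
      (fun i => C i.castSucc (Fin.last n)) ((d / e : ℕ) : ℤ) = C
    funext i j
    refine Fin.lastCases ?_ (fun j' => ?_) j
    · refine Fin.lastCases ?_ (fun i' => ?_) i
      · simp only [buildMat_last_last]
        exact hMde.symm
      · simp
    · refine Fin.lastCases ?_ (fun i' => ?_) i
      · simp only [buildMat_last_cs]
        exact (hWT.1 (Fin.last n) j'.castSucc (Fin.castSucc_lt_last j')).symm
      · simp
  · -- right inverse
    rintro ⟨⟨B, hB, hdetB⟩, ⟨a, hbd, hgcd⟩⟩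
    apply Prod.ext
    · apply Subtype.ext
      show (Matrix.of fun i j : Fin n =>
        buildMat B a ((d / e : ℕ) : ℤ) i.castSucc j.castSucc) = B
      funext i j
      simp
    · apply Subtype.ext
      show (fun i => buildMat B a ((d / e : ℕ) : ℤ) i.castSucc (Fin.last n)) = a
      funext i
      simp

lemma wt_prod_mem (hd : 0 < d) (C : WTset (n+1) d) :
    (∏ j : Fin n, C.1 j.castSucc j.castSucc).toNat ∈ d.divisors := by
  obtain ⟨C, hWT, hdet⟩ := C
  have hP : 0 < ∏ j : Fin n, C j.castSucc j.castSucc :=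
    Finset.prod_pos fun j _ => hWT.2.1 _
  have hM : 0 < C (Fin.last n) (Fin.last n) := hWT.2.1 _
  have hsplit := wt_split C hWT hdet
  refine Nat.mem_divisors.mpr ⟨⟨(C (Fin.last n) (Fin.last n)).toNat, ?_⟩, hd.ne'⟩
  have h : (((∏ j : Fin n, C j.castSucc j.castSucc).toNat
      * (C (Fin.last n) (Fin.last n)).toNat : ℕ) : ℤ) = (d : ℤ) := by
    push_cast
    rw [Int.toNat_of_nonneg hP.le, Int.toNat_of_nonneg hM.le]
    exact hsplit
  exact_mod_cast h.symm

lemma card_step (hd : 0 < d) :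
    (Nat.card (WTset (n+1) d) : ℤ)
      = ∑ e ∈ d.divisors, (Nat.card (WTset n e) : ℤ) * (Nat.card (Col n (d/e)) : ℤ) := by
  classical
  set fib : WTset (n+1) d → {e : ℕ // e ∈ d.divisors} :=
    fun C => ⟨(∏ j : Fin n, C.1 j.castSucc j.castSucc).toNat, wt_prod_mem hd C⟩ with hfib
  have E : WTset (n+1) d ≃ Σ e : {e : ℕ // e ∈ d.divisors}, WTset n e.1 × Col n (d / e.1) :=
    (Equiv.sigmaFiberEquiv fib).symm.trans
      (Equiv.sigmaCongrRight fun e =>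
        ((Equiv.subtypeEquivRight fun C => by
          rw [hfib]
          exact ⟨fun h => by rw [← h], fun h => Subtype.ext h⟩).trans
          (stepEquiv e.1 hd e.2)))
  rw [Nat.card_congr E, Nat.card_eq_fintype_card, Fintype.card_sigma]
  push_cast
  rw [← Finset.sum_coe_sort d.divisors
    (fun e => (Nat.card (WTset n e) : ℤ) * (Nat.card (Col n (d/e)) : ℤ))]
  refine Finset.sum_congr rfl fun e _ => ?_
  rw [Fintype.card_prod]
  push_cast
  rw [Nat.card_eq_fintype_card, Nat.card_eq_fintype_card]
end step

lemma jordan_one (d : ℕ) (hd : 0 < d) : jordan 1 d = (Nat.totient d : ℤ) := by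
  have h := (ArithmeticFunction.sum_eq_iff_sum_mul_moebius_eq
      (R := ℤ) (f := fun n => (Nat.totient n : ℤ)) (g := fun n => (n : ℤ))).mp ?_ d hd
  · simp only [Int.cast_id] at h
    rw [← h, Nat.sum_divisorsAntidiagonal' (f := fun i j => (moebius i : ℤ) * (j : ℤ))]
    unfold jordan
    refine Finset.sum_congr rfl fun e he => ?_
    rw [pow_one]
  · intro m hm
    have := Nat.sum_totient m
    exact_mod_cast congrArg (Nat.cast (R := ℤ)) this

def phiJex : ℕ → ℕ → ℤ
  | 0 => fun m => if m = 1 then 1 else 0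
  | 1 => fun m => if m = 1 then 1 else 0
  | (k+2) => dConv (phiJex (k+1)) (jordan (k+1))

lemma main_count : ∀ n, 1 ≤ n → ∀ d, 0 < d →
    (Nat.card (WTset n d) : ℤ) = phiJex n d := by
  intro n
  induction n with
  | zero => omega
  | succ k ih =>
    intro _ d hd
    rcases Nat.eq_zero_or_pos k with rfl | hk
    · rw [wt_base d]
      simp [phiJex]
    · obtain ⟨k', rfl⟩ : ∃ k', k = k' + 1 := ⟨k - 1, by omega⟩
      rw [card_step hd]
      show _ = phiJex (k' + 2) d
      rw [show phiJex (k' + 2) = dConv (phiJex (k' + 1)) (jordan (k' + 1)) from rfl]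
      unfold dConv
      refine Finset.sum_congr rfl fun e he => ?_
      obtain ⟨hdvd, hd0⟩ := Nat.mem_divisors.mp he
      have he0 : 0 < e := Nat.pos_of_dvd_of_pos hdvd hd
      have hm0 : 0 < d / e := Nat.div_pos (Nat.le_of_dvd hd hdvd) he0
      rw [ih (by omega) e he0, col_card _ _ hm0]

lemma phiJ_eq : ∀ n, 2 ≤ n → ∀ d, 0 < d → phiJ n d = phiJex n d := by
  intro n
  induction n with
  | zero => omega
  | succ k ih =>
    intro hn d hd
    rcases Nat.lt_or_ge k 2 with hk | hk
    · interval_cases k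
      · omega
      · -- n = 2
        show (Nat.totient d : ℤ) = phiJex 2 d
        rw [show phiJex 2 = dConv (phiJex 1) (jordan 1) from rfl]
        unfold dConv
        rw [Finset.sum_eq_single_of_mem 1 (Nat.one_mem_divisors.mpr hd.ne')]
        · simp [phiJex, jordan_one d hd]
        · intro e he hne
          simp [phiJex, hne]
    · obtain ⟨k', rfl⟩ : ∃ k', k = k' + 2 := ⟨k - 2, by omega⟩
      show dConv (phiJ (k' + 2)) (jordan (k' + 2)) d = dConv (phiJex (k' + 2)) (jordan (k' + 2)) d
      unfold dConv
      refine Finset.sum_congr rfl fun e he => ?_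
      obtain ⟨hdvd, hd0⟩ := Nat.mem_divisors.mp he
      have he0 : 0 < e := Nat.pos_of_dvd_of_pos hdvd hd
      rw [ih (by omega) e he0]

theorem stmt19 {n : ℕ} (hn : 2 ≤ n) (d : ℕ) (hd : 0 < d) :
    (Nat.card {C : Matrix (Fin n) (Fin n) ℤ // WeaklyTerminal C ∧ C.det = (d : ℤ)} : ℤ)
      = phiJ n d := by
  rw [show {C : Matrix (Fin n) (Fin n) ℤ // WeaklyTerminal C ∧ C.det = (d : ℤ)} = WTset n d
    from rfl]
  rw [main_count n (by omega) d hd, phiJ_eq n hn d hd]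
end
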